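/- arXiv:1207.5676 — 3 statements merged into one kernel-verified Lean document; each statement's English description precedes it below -/
import Mathlib

section
/- Conservation of total energy for the coupled acoustic-oscillator system: suppose (p, v, y₁,…,yₙ, z₁,…,zₙ) is a classical solution of the system ∂p/∂t = −a²ρ₀ ∂v/∂x and ∂v/∂t = −ρ₀⁻¹ ∂p/∂x on ℝ∖{s₁,…,sₙ} for each time, Mⱼ dzⱼ/dt = −Kⱼ yⱼ − S₀ (p(t, sⱼ⁺) − p(t, sⱼ⁻)), dyⱼ/dt = zⱼ(t) = v(t, sⱼ), where for each t the functions p(t,·), v(t,·), ∂p/∂t(t,·), ∂v/∂t(t,·) are square-integrable, v(t,·) is continuous, p(t,·) is absolutely continuous on each interval between consecutive points sⱼ with one-sided limits at the sⱼ, and all fields are C¹ in time with derivatives jointly controlled so that differentiation under the integral sign is justified (e.g. p, v ∈ C¹(ℝ; L²(ℝ))). Then the total energy E(t) = (S₀/(2a²ρ₀)) ∫|p(t,x)|²dx + (S₀ρ₀/2) ∫|v(t,x)|²dx + Σⱼ [ (Kⱼ/2)|yⱼ(t)|² + (Mⱼ/2)|zⱼ(t)|² ] is constant in t. -/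
open MeasureTheory Filter Topology

section EnergyConservationHelpers
open Set

private lemma EC_tendsto_atTop_zero {f g : ℝ → ℝ} {A : ℝ}
    (hf : IntegrableOn f (Ioi A)) (hg : IntegrableOn g (Ioi A))
    (hderiv : ∀ x ∈ Ioi A, HasDerivAt f (g x) x) :
    Tendsto f atTop (𝓝 0) := by
  have T := tendsto_limUnder_of_hasDerivAt_of_integrableOn_Ioi hderiv hg
  have h0 : limUnder atTop f = 0 := by
    apply IntegrableAtFilter.eq_zero_of_tendsto ⟨Ioi A, Ioi_mem_atTop A, hf⟩ ?_ T
    intro s hs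
    rcases mem_atTop_sets.1 hs with ⟨b, hb⟩
    apply le_antisymm le_top
    rw [← Real.volume_Ici (a := b)]
    exact measure_mono hb
  rwa [h0] at T

private lemma EC_tendsto_atBot_zero {f g : ℝ → ℝ} {A : ℝ}
    (hf : IntegrableOn f (Iic A)) (hg : IntegrableOn g (Iic A))
    (hderiv : ∀ x ∈ Iic A, HasDerivAt f (g x) x) :
    Tendsto f atBot (𝓝 0) := by
  have T := tendsto_limUnder_of_hasDerivAt_of_integrableOn_Iic hderiv hg
  have h0 : limUnder atBot f = 0 := by
    apply IntegrableAtFilter.eq_zero_of_tendsto ⟨Iic A, Iic_mem_atBot A, hf⟩ ?_ T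
    intro s hs
    rcases mem_atBot_sets.1 hs with ⟨b, hb⟩
    apply le_antisymm le_top
    rw [← Real.volume_Iic (a := b)]
    exact measure_mono hb
  rwa [h0] at T

private lemma EC_integral_Ioi {f g : ℝ → ℝ} {A LA : ℝ}
    (hg : IntegrableOn g (Ioi A))
    (hderiv : ∀ x ∈ Ioi A, HasDerivAt f (g x) x)
    (hLA : Tendsto f (𝓝[>] A) (𝓝 LA))
    (hlim : Tendsto f atTop (𝓝 0)) :
    ∫ x in Ioi A, g x = -LA := by
  classical
  set F : ℝ → ℝ := Function.update f A LA with hF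
  have hFf : ∀ x ∈ Ioi A, F x = f x := fun x hx =>
    Function.update_of_ne (ne_of_gt hx) _ _
  have hderiv' : ∀ x ∈ Ioi A, HasDerivAt F (g x) x := by
    intro x hx
    apply (hderiv x hx).congr_of_eventuallyEq
    filter_upwards [Ioi_mem_nhds hx] with y hy using (hFf y hy)
  have hcont : ContinuousWithinAt F (Ici A) A := by
    rw [hF, continuousWithinAt_update_same]
    rwa [Set.Ici_sdiff_left]
  have hlim' : Tendsto F atTop (𝓝 0) := by
    apply hlim.congr'
    filter_upwards [Ioi_mem_atTop A] with x hx using (hFf x hx).symm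
  have := integral_Ioi_of_hasDerivAt_of_tendsto hcont hderiv' hg hlim'
  rw [this, hF, Function.update_self, zero_sub]

private lemma EC_integral_Iic {f g : ℝ → ℝ} {A : ℝ}
    (hf : IntegrableOn f (Iic A)) (hg : IntegrableOn g (Iic A))
    (hderiv : ∀ x ∈ Iic A, HasDerivAt f (g x) x) :
    ∫ x in Iic A, g x = f A := by
  have hlim := EC_tendsto_atBot_zero hf hg hderiv
  have := integral_Iic_of_hasDerivAt_of_tendsto
    ((hderiv A (Set.self_mem_Iic)).continuousAt.continuousWithinAt)
    (fun x hx => hderiv x hx.out.le) hg hlim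
  rw [this, sub_zero]

private lemma EC_integral_Ioo {f g : ℝ → ℝ} {A B LA LB : ℝ} (hAB : A < B)
    (hg : IntegrableOn g (Ioo A B))
    (hderiv : ∀ x ∈ Ioo A B, HasDerivAt f (g x) x)
    (hLA : Tendsto f (𝓝[>] A) (𝓝 LA))
    (hLB : Tendsto f (𝓝[<] B) (𝓝 LB)) :
    ∫ x in Ioo A B, g x = LB - LA := by
  classical
  set F : ℝ → ℝ := Function.update (Function.update f A LA) B LB with hF
  have hne : A ≠ B := ne_of_lt hAB
  have hFf : ∀ x, x ≠ A → x ≠ B → F x = f x := fun x h1 h2 => by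
    rw [hF, Function.update_of_ne h2, Function.update_of_ne h1]
  have hFA : F A = LA := by
    rw [hF, Function.update_of_ne hne, Function.update_self]
  have hFB : F B = LB := by rw [hF, Function.update_self]
  have hderiv' : ∀ x ∈ Ioo A B, HasDerivAt F (g x) x := by
    intro x hx
    apply (hderiv x hx).congr_of_eventuallyEq
    filter_upwards [Ioo_mem_nhds hx.1 hx.2] with y hy using
      (hFf y (ne_of_gt hy.1) (ne_of_lt hy.2))
  have hcont : ContinuousOn F (Icc A B) := by
    intro x hx
    rcases eq_or_ne x A with rfl | hxA
    · -- at A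
      have h1 : Tendsto f (𝓝[Icc x B \ {x}] x) (𝓝 LA) :=
        hLA.mono_left (nhdsWithin_mono _ (fun y hy => lt_of_le_of_ne hy.1.1 (Ne.symm hy.2)))
      rw [hF, Function.update_comm hne, continuousWithinAt_update_same]
      apply h1.congr'
      filter_upwards [eventually_nhdsWithin_of_eventually_nhds
        (eventually_ne_nhds hAB.ne)] with y hy using
        (Function.update_of_ne hy _ _).symm
    rcases eq_or_ne x B with rfl | hxB
    · -- at B
      have h1 : Tendsto f (𝓝[Icc A x \ {x}] x) (𝓝 LB) :=
        hLB.mono_left (nhdsWithin_mono _ (fun y hy => lt_of_le_of_ne hy.1.2 hy.2))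
      have h2 : Tendsto (Function.update f A LA) (𝓝[Icc A x \ {x}] x) (𝓝 LB) := by
        apply h1.congr'
        filter_upwards [eventually_nhdsWithin_of_eventually_nhds
          (eventually_ne_nhds hAB.ne')] with y hy using
          (Function.update_of_ne hy _ _).symm
      rw [hF, continuousWithinAt_update_same]
      exact h2
    · exact (hderiv' x ⟨lt_of_le_of_ne hx.1 (Ne.symm hxA),
        lt_of_le_of_ne hx.2 hxB⟩).continuousAt.continuousWithinAt
  have hgIoc : IntegrableOn g (Ioc A B) := hg.congr_set_ae Ioo_ae_eq_Ioc.symm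
  have hint : IntervalIntegrable g volume A B := by
    rwa [intervalIntegrable_iff_integrableOn_Ioc_of_le hAB.le]
  have key := intervalIntegral.integral_eq_sub_of_hasDeriv_right_of_le hAB.le hcont
    (fun x hx => (hderiv' x hx).hasDerivWithinAt) hint
  rw [hFA, hFB] at key
  rw [← integral_Ioc_eq_integral_Ioo, ← intervalIntegral.integral_of_le hAB.le]
  exact key

private lemma EC_key_tail : ∀ (n : ℕ) (s : Fin n → ℝ), StrictMono s →
    ∀ (A LA : ℝ), (∀ j, A < s j) → ∀ f g : ℝ → ℝ,
    IntegrableOn f (Ioi A) → IntegrableOn g (Ioi A) →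
    (∀ x ∈ Ioi A, (∀ j, x ≠ s j) → HasDerivAt f (g x) x) →
    Tendsto f (𝓝[>] A) (𝓝 LA) →
    ∀ (Lm Lp : Fin n → ℝ),
    (∀ j, Tendsto f (𝓝[<] (s j)) (𝓝 (Lm j))) →
    (∀ j, Tendsto f (𝓝[>] (s j)) (𝓝 (Lp j))) →
    ∫ x in Ioi A, g x = (∑ j, (Lm j - Lp j)) - LA := by
  intro n
  induction n with
  | zero =>
    intro s _ A LA _ f g hf hg hderiv hLA _ _ _ _
    have hderiv' : ∀ x ∈ Ioi A, HasDerivAt f (g x) x :=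
      fun x hx => hderiv x hx (fun j => j.elim0)
    have hlim := EC_tendsto_atTop_zero hf hg hderiv'
    rw [EC_integral_Ioi hg hderiv' hLA hlim]
    simp
  | succ n IH =>
    intro s hs A LA hA f g hf hg hderiv hLA Lm Lp hLm hLp
    set B := s 0 with hB
    have hAB : A < B := hA 0
    -- derivative statement on (A, B)
    have hderivAB : ∀ x ∈ Ioo A B, HasDerivAt f (g x) x := by
      intro x hx
      refine hderiv x hx.1 (fun j => ne_of_lt (lt_of_lt_of_le hx.2 ?_))
      exact hs.monotone (Fin.zero_le j)
    -- derivative statement on (B, ∞) avoiding the other walls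
    have hderivB : ∀ x ∈ Ioi B, (∀ j : Fin n, x ≠ s j.succ) → HasDerivAt f (g x) x := by
      intro x hx hxne
      refine hderiv x (lt_trans hAB hx) (fun j => ?_)
      rcases Fin.eq_zero_or_eq_succ j with hj | ⟨i, rfl⟩
      · rw [hj]; exact ne_of_gt hx
      · exact hxne i
    have hsplit : (∫ x in Ioc A B, g x) + (∫ x in Ioi B, g x) = ∫ x in Ioi A, g x := by
      rw [← setIntegral_union (Ioc_disjoint_Ioi le_rfl) measurableSet_Ioi
        (hg.mono_set Ioc_subset_Ioi_self) (hg.mono_set (Ioi_subset_Ioi hAB.le)),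
        Ioc_union_Ioi_eq_Ioi hAB.le]
    have h1 : ∫ x in Ioc A B, g x = Lm 0 - LA := by
      rw [integral_Ioc_eq_integral_Ioo]
      exact EC_integral_Ioo hAB (hg.mono_set Ioo_subset_Ioi_self) hderivAB hLA (hLm 0)
    have h2 : ∫ x in Ioi B, g x =
        (∑ j : Fin n, (Lm j.succ - Lp j.succ)) - Lp 0 := by
      refine IH (fun j => s j.succ) (fun i j hij => hs (by simpa using hij)) B (Lp 0)
        (fun j => hs (Fin.succ_pos j)) f g
        (hf.mono_set (Ioi_subset_Ioi hAB.le)) (hg.mono_set (Ioi_subset_Ioi hAB.le))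
        hderivB (hLp 0) (fun j => Lm j.succ) (fun j => Lp j.succ)
        (fun j => hLm j.succ) (fun j => hLp j.succ)
    rw [← hsplit, h1, h2, Fin.sum_univ_succ]
    ring

private lemma EC_key {n : ℕ} {s : Fin n → ℝ} (hs : StrictMono s) {f g : ℝ → ℝ}
    (hf : Integrable f) (hg : Integrable g)
    (hderiv : ∀ x, (∀ j, x ≠ s j) → HasDerivAt f (g x) x)
    {Lm Lp : Fin n → ℝ}
    (hLm : ∀ j, Tendsto f (𝓝[<] (s j)) (𝓝 (Lm j)))
    (hLp : ∀ j, Tendsto f (𝓝[>] (s j)) (𝓝 (Lp j))) :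
    ∫ x, g x = ∑ j, (Lm j - Lp j) := by
  obtain ⟨B, hB⟩ : ∃ B : ℝ, ∀ j, B < s j := by
    cases n with
    | zero => exact ⟨0, fun j => j.elim0⟩
    | succ n => exact ⟨s 0 - 1, fun j =>
        lt_of_lt_of_le (by linarith) (hs.monotone (Fin.zero_le j))⟩
  have hderivIic : ∀ x ∈ Iic B, HasDerivAt f (g x) x := by
    intro x hx
    exact hderiv x (fun j => ne_of_lt (lt_of_le_of_lt hx (hB j)))
  have h1 : ∫ x in Iic B, g x = f B :=
    EC_integral_Iic hf.integrableOn hg.integrableOn hderivIic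
  have h2 : ∫ x in Ioi B, g x = (∑ j, (Lm j - Lp j)) - f B := by
    refine EC_key_tail n s hs B (f B) hB f g hf.integrableOn hg.integrableOn
      (fun x hx h => hderiv x h) ?_ Lm Lp hLm hLp
    exact ((hderivIic B Set.self_mem_Iic).continuousAt.continuousWithinAt)
  rw [← intervalIntegral.integral_Iic_add_Ioi hg.integrableOn hg.integrableOn, h1, h2]
  ring

end EnergyConservationHelpers

/-- Conservation of the total energy for the coupled
acoustic-field/oscillator system.  Here `p v : ℝ → ℝ → ℝ` are the pressure and velocity
fields (time is the first variable), `px`, `vx` are their spatial derivatives off the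
walls, `y j`, `z j` are the oscillator displacements and velocities, and
`pplus j t`, `pminus j t` the one-sided limits `p(t, sⱼ±)`.  Under the stated
regularity (classical solution, square-integrable fields, `v(t,·)` continuous,
`p(t,·)` absolutely continuous between consecutive walls with one-sided limits at the
walls, and locally-in-time dominated time-derivatives justifying differentiation under
the integral sign) the total energy
`E(t) = (S₀/(2a²ρ₀))∫p² + (S₀ρ₀/2)∫v² + Σⱼ[(Kⱼ/2)yⱼ² + (Mⱼ/2)zⱼ²]`
is constant. -/
theorem energy_conservation
    (n : ℕ) (s : Fin n → ℝ) (hs : StrictMono s)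
    (ρ₀ a S₀ : ℝ) (hρ₀ : 0 < ρ₀) (ha : 0 < a) (hS₀ : 0 < S₀)
    (M K : Fin n → ℝ) (hM : ∀ j, 0 < M j) (hK : ∀ j, 0 < K j)
    (p v px vx : ℝ → ℝ → ℝ) (y z : Fin n → ℝ → ℝ) (pplus pminus : Fin n → ℝ → ℝ)
    -- spatial derivatives off the walls
    (hpx : ∀ t x, (∀ j, x ≠ s j) → HasDerivAt (fun ξ => p t ξ) (px t x) x)
    (hvx : ∀ t x, (∀ j, x ≠ s j) → HasDerivAt (fun ξ => v t ξ) (vx t x) x)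
    -- the acoustic equations ∂p/∂t = −a²ρ₀ ∂v/∂x, ∂v/∂t = −ρ₀⁻¹ ∂p/∂x on ℝ∖S
    (hpt : ∀ t x, (∀ j, x ≠ s j) →
      HasDerivAt (fun τ => p τ x) (-(a ^ 2 * ρ₀) * vx t x) t)
    (hvt : ∀ t x, (∀ j, x ≠ s j) →
      HasDerivAt (fun τ => v τ x) (-(ρ₀⁻¹) * px t x) t)
    -- one-sided limits of the pressure at the walls
    (hplus : ∀ j t, Tendsto (fun ξ => p t ξ) (𝓝[>] (s j)) (𝓝 (pplus j t)))
    (hminus : ∀ j t, Tendsto (fun ξ => p t ξ) (𝓝[<] (s j)) (𝓝 (pminus j t)))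
    -- Newton's law for the oscillators and the kinematic conditions
    (hz : ∀ (j : Fin n) (t : ℝ), HasDerivAt (z j)
      ((-(K j) * y j t - S₀ * (pplus j t - pminus j t)) / M j) t)
    (hy : ∀ (j : Fin n) (t : ℝ), HasDerivAt (y j) (z j t) t)
    (hbc : ∀ (j : Fin n) (t : ℝ), z j t = v t (s j))
    -- regularity: v(t,·) continuous, p(t,·) absolutely continuous between the walls
    (hvcont : ∀ t, Continuous (fun ξ => v t ξ))
    (hpac : ∀ (t x₁ x₂ : ℝ), x₁ ≤ x₂ → (∀ j, s j ∉ Set.Icc x₁ x₂) →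
      p t x₂ - p t x₁ = ∫ ξ in x₁..x₂, px t ξ)
    -- square-integrability of the fields and of their time derivatives
    (hL2p : ∀ t, Integrable (fun x => (p t x) ^ 2))
    (hL2v : ∀ t, Integrable (fun x => (v t x) ^ 2))
    (hL2px : ∀ t, Integrable (fun x => (px t x) ^ 2))
    (hL2vx : ∀ t, Integrable (fun x => (vx t x) ^ 2))
    (hmp : ∀ t, AEStronglyMeasurable (fun x => p t x) volume)
    (hmv : ∀ t, AEStronglyMeasurable (fun x => v t x) volume)
    -- local-in-time domination justifying differentiation under the integral sign
    (hdom : ∀ T > (0 : ℝ), ∃ g : ℝ → ℝ, Integrable g ∧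
      ∀ t, |t| ≤ T → ∀ x, (∀ j, x ≠ s j) →
        |p t x * vx t x| ≤ g x ∧ |v t x * px t x| ≤ g x) :
    ∀ t : ℝ,
      (S₀ / (2 * a ^ 2 * ρ₀)) * (∫ x : ℝ, (p t x) ^ 2)
        + (S₀ * ρ₀ / 2) * (∫ x : ℝ, (v t x) ^ 2)
        + ∑ j, (K j / 2 * (y j t) ^ 2 + M j / 2 * (z j t) ^ 2)
      = (S₀ / (2 * a ^ 2 * ρ₀)) * (∫ x : ℝ, (p 0 x) ^ 2)
        + (S₀ * ρ₀ / 2) * (∫ x : ℝ, (v 0 x) ^ 2)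
        + ∑ j, (K j / 2 * (y j 0) ^ 2 + M j / 2 * (z j 0) ^ 2) := by
  classical
  -- almost every point is not a wall
  have hnull : ∀ᵐ x : ℝ ∂volume, ∀ j : Fin n, x ≠ s j := by
    have h0 : volume (Set.range s) = 0 :=
      (Set.finite_range s).countable.measure_zero _
    have := measure_eq_zero_iff_ae_notMem.mp h0
    filter_upwards [this] with x hx j hj
    exact hx ⟨j, hj.symm⟩
  -- measurability of the spatial derivatives
  have hmvx : ∀ t, AEStronglyMeasurable (fun x => vx t x) volume := by
    intro t
    refine ((measurable_deriv (fun ξ => v t ξ)).aestronglyMeasurable).congr ?_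
    filter_upwards [hnull] with x hx using ((hvx t x hx).deriv)
  have hmpx : ∀ t, AEStronglyMeasurable (fun x => px t x) volume := by
    intro t
    refine ((measurable_deriv (fun ξ => p t ξ)).aestronglyMeasurable).congr ?_
    filter_upwards [hnull] with x hx using ((hpx t x hx).deriv)
  -- products of L² functions are integrable
  have hmul : ∀ (f g : ℝ → ℝ), Integrable (fun x => f x ^ 2) →
      Integrable (fun x => g x ^ 2) →
      AEStronglyMeasurable f volume → AEStronglyMeasurable g volume →
      Integrable (fun x => f x * g x) := by
    intro f g hf hg hmf hmg
    refine ((hf.add hg).div_const 2).mono' (hmf.mul hmg) ?_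
    filter_upwards with x
    simp only [Pi.add_apply]
    rw [Real.norm_eq_abs, abs_mul]
    nlinarith [sq_abs (f x), sq_abs (g x), abs_nonneg (f x), abs_nonneg (g x),
      sq_nonneg (|f x| - |g x|)]
  set E : ℝ → ℝ := fun t =>
    (S₀ / (2 * a ^ 2 * ρ₀)) * (∫ x : ℝ, (p t x) ^ 2)
      + (S₀ * ρ₀ / 2) * (∫ x : ℝ, (v t x) ^ 2)
      + ∑ j, (K j / 2 * (y j t) ^ 2 + M j / 2 * (z j t) ^ 2) with hE
  have hEderiv : ∀ t₀ : ℝ, HasDerivAt E 0 t₀ := by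
    intro t₀
    obtain ⟨g, hgint, hgbd⟩ := hdom (|t₀| + 1) (by positivity)
    have hball : ∀ t ∈ Metric.ball t₀ 1, |t| ≤ |t₀| + 1 := by
      intro t ht
      rw [Metric.mem_ball, Real.dist_eq] at ht
      have := abs_sub_abs_le_abs_sub t t₀
      linarith
    -- derivative of ∫ p²
    have Hp : HasDerivAt (fun t => ∫ x : ℝ, (p t x) ^ 2)
        (∫ x : ℝ, (-(2 * (a ^ 2 * ρ₀))) * (p t₀ x * vx t₀ x)) t₀ := by
      refine (hasDerivAt_integral_of_dominated_loc_of_deriv_le (Metric.ball_mem_nhds t₀ one_pos)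
        (F := fun t x => (p t x) ^ 2)
        (F' := fun t x => (-(2 * (a ^ 2 * ρ₀))) * (p t x * vx t x))
        (bound := fun x => 2 * (a ^ 2 * ρ₀) * g x)
        (Eventually.of_forall fun t => (hL2p t).aestronglyMeasurable)
        (hL2p t₀)
        (((hmp t₀).mul (hmvx t₀)).const_mul _)
        ?_ (hgint.const_mul _) ?_).2
      · filter_upwards [hnull] with x hx t ht
        have hb := (hgbd t (hball t ht) x hx).1
        rw [norm_mul, Real.norm_eq_abs, Real.norm_eq_abs, abs_neg,
          abs_of_pos (by positivity : (0:ℝ) < 2 * (a ^ 2 * ρ₀))]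
        exact mul_le_mul_of_nonneg_left hb (by positivity)
      · filter_upwards [hnull] with x hx t ht
        have h := (hpt t x hx).pow 2
        refine h.congr_deriv ?_
        push_cast
        ring
    -- derivative of ∫ v²
    have Hv : HasDerivAt (fun t => ∫ x : ℝ, (v t x) ^ 2)
        (∫ x : ℝ, (-(2 * ρ₀⁻¹)) * (v t₀ x * px t₀ x)) t₀ := by
      refine (hasDerivAt_integral_of_dominated_loc_of_deriv_le (Metric.ball_mem_nhds t₀ one_pos)
        (F := fun t x => (v t x) ^ 2)
        (F' := fun t x => (-(2 * ρ₀⁻¹)) * (v t x * px t x))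
        (bound := fun x => 2 * ρ₀⁻¹ * g x)
        (Eventually.of_forall fun t => (hL2v t).aestronglyMeasurable)
        (hL2v t₀)
        (((hmv t₀).mul (hmpx t₀)).const_mul _)
        ?_ (hgint.const_mul _) ?_).2
      · filter_upwards [hnull] with x hx t ht
        have hb := (hgbd t (hball t ht) x hx).2
        rw [norm_mul, Real.norm_eq_abs, Real.norm_eq_abs, abs_neg,
          abs_of_pos (by positivity : (0:ℝ) < 2 * ρ₀⁻¹)]
        exact mul_le_mul_of_nonneg_left hb (by positivity)
      · filter_upwards [hnull] with x hx t ht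
        have h := (hvt t x hx).pow 2
        refine h.congr_deriv ?_
        push_cast
        ring
    -- derivative of the oscillator sum
    have Hosc : HasDerivAt (fun t => ∑ j, (K j / 2 * (y j t) ^ 2 + M j / 2 * (z j t) ^ 2))
        (∑ j, (K j / 2 * ((2:ℕ) * (y j t₀) ^ 1 * z j t₀)
          + M j / 2 * ((2:ℕ) * (z j t₀) ^ 1 *
            ((-(K j) * y j t₀ - S₀ * (pplus j t₀ - pminus j t₀)) / M j)))) t₀ := by
      apply HasDerivAt.fun_sum
      intro j _
      exact (((hy j t₀).pow 2).const_mul _).add (((hz j t₀).pow 2).const_mul _)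
    -- energy identity for the spatial part
    have hint1 : Integrable (fun x => p t₀ x * vx t₀ x) :=
      hmul _ _ (hL2p t₀) (hL2vx t₀) (hmp t₀) (hmvx t₀)
    have hint2 : Integrable (fun x => v t₀ x * px t₀ x) :=
      hmul _ _ (hL2v t₀) (hL2px t₀) (hmv t₀) (hmpx t₀)
    have hWkey : (∫ x : ℝ, p t₀ x * vx t₀ x) + (∫ x : ℝ, v t₀ x * px t₀ x)
        = ∑ j, (pminus j t₀ * v t₀ (s j) - pplus j t₀ * v t₀ (s j)) := by
      rw [← integral_add hint1 hint2]
      refine EC_key hs (f := fun x => p t₀ x * v t₀ x)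
        (g := fun x => p t₀ x * vx t₀ x + v t₀ x * px t₀ x)
        (hmul _ _ (hL2p t₀) (hL2v t₀) (hmp t₀) (hmv t₀))
        (hint1.add hint2) ?_
        (Lm := fun j => pminus j t₀ * v t₀ (s j))
        (Lp := fun j => pplus j t₀ * v t₀ (s j)) ?_ ?_
      · intro x hx
        have h := (hpx t₀ x hx).mul (hvx t₀ x hx)
        refine h.congr_deriv ?_
        ring
      · intro j
        exact (hminus j t₀).mul (((hvcont t₀).tendsto (s j)).mono_left nhdsWithin_le_nhds)
      · intro j
        exact (hplus j t₀).mul (((hvcont t₀).tendsto (s j)).mono_left nhdsWithin_le_nhds)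
    -- assemble
    have hD := ((Hp.const_mul (S₀ / (2 * a ^ 2 * ρ₀))).add
      (Hv.const_mul (S₀ * ρ₀ / 2))).add Hosc
    rw [integral_const_mul, integral_const_mul] at hD
    have hzero :
        S₀ / (2 * a ^ 2 * ρ₀) * (-(2 * (a ^ 2 * ρ₀)) * ∫ x : ℝ, p t₀ x * vx t₀ x)
        + S₀ * ρ₀ / 2 * (-(2 * ρ₀⁻¹) * ∫ x : ℝ, v t₀ x * px t₀ x)
        + ∑ j, (K j / 2 * ((2:ℕ) * (y j t₀) ^ 1 * z j t₀)
          + M j / 2 * ((2:ℕ) * (z j t₀) ^ 1 *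
            ((-(K j) * y j t₀ - S₀ * (pplus j t₀ - pminus j t₀)) / M j))) = 0 := by
      have e3 : ∑ j, (K j / 2 * ((2:ℕ) * (y j t₀) ^ 1 * z j t₀)
          + M j / 2 * ((2:ℕ) * (z j t₀) ^ 1 *
            ((-(K j) * y j t₀ - S₀ * (pplus j t₀ - pminus j t₀)) / M j)))
          = ∑ j, S₀ * (pminus j t₀ * v t₀ (s j) - pplus j t₀ * v t₀ (s j)) := by
        refine Finset.sum_congr rfl fun j _ => ?_
        rw [← hbc j t₀]
        have hMj := (hM j).ne'
        push_cast
        field_simp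
        ring
      rw [e3, ← Finset.mul_sum, ← hWkey]
      have ha' : a ≠ 0 := ha.ne'
      have hρ' : ρ₀ ≠ 0 := hρ₀.ne'
      field_simp
      ring
    rw [hzero] at hD
    exact hD
  intro t
  have hdiff : Differentiable ℝ E := fun t => (hEderiv t).differentiableAt
  have hd0 : ∀ t, deriv E t = 0 := fun t => (hEderiv t).deriv
  exact is_const_of_deriv_eq_zero hdiff hd0 t 0
end

section
/- Characterization of the domain of Â²: for Ψ = (p,v,y,z) ∈ D(Â), one has ÂΨ ∈ D(Â) if and only if v′ ∈ H¹(ℝ∖S), p_reg′ ∈ H¹(ℝ), and the continuous representative of p_reg′ satisfies p_reg′(sⱼ) = ρ₀( (Kⱼ/Mⱼ) yⱼ + (S₀/Mⱼ) σⱼ(p) ) for every j = 1,…,n. -/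
open MeasureTheory Filter Topology

namespace BubbleAcoustics

/-- A candidate state of the coupled acoustic-field/oscillator system, together with
auxiliary data: `pd` is the derivative of the pressure `p` on `ℝ ∖ S` (equivalently, the
derivative of the regular part `p_reg` of `p`), `vd` is the derivative of the velocity
field `v`, and `pplus j`, `pminus j` are the one-sided limits `p(sⱼ⁺)`, `p(sⱼ⁻)`. -/
structure State (n : ℕ) where
  p : ℝ → ℂ
  v : ℝ → ℂ
  y : Fin n → ℂ
  z : Fin n → ℂ
  pd : ℝ → ℂ
  vd : ℝ → ℂ
  pplus : Fin n → ℂ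
  pminus : Fin n → ℂ

/-- The jump `σⱼ(p) = p(sⱼ⁺) − p(sⱼ⁻)`. -/
def State.sigma {n : ℕ} (Ψ : State n) (j : Fin n) : ℂ := Ψ.pplus j - Ψ.pminus j

/-- Membership in the domain `D(Â)`:
`p ∈ L²(ℝ) ∩ H¹(ℝ∖S)` (absolutely continuous on each interval avoiding the points `s j`,
with square-integrable derivative `pd`, and with one-sided limits `pplus j`, `pminus j`
at each `s j`), `v ∈ H¹(ℝ)` (absolutely continuous on `ℝ` with square-integrable
derivative `vd`), and the boundary conditions `v (s j) = z j`. -/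
def InDomain {n : ℕ} (s : Fin n → ℝ) (Ψ : State n) : Prop :=
  Integrable (fun x => ‖Ψ.p x‖ ^ 2) ∧
  Integrable (fun x => ‖Ψ.v x‖ ^ 2) ∧
  Integrable (fun x => ‖Ψ.pd x‖ ^ 2) ∧
  Integrable (fun x => ‖Ψ.vd x‖ ^ 2) ∧
  AEStronglyMeasurable Ψ.p volume ∧
  (∀ x y : ℝ, x ≤ y → (∀ j, s j ∉ Set.Icc x y) →
      Ψ.p y - Ψ.p x = ∫ t in x..y, Ψ.pd t) ∧
  (∀ j, Tendsto Ψ.p (𝓝[>] (s j)) (𝓝 (Ψ.pplus j))) ∧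
  (∀ j, Tendsto Ψ.p (𝓝[<] (s j)) (𝓝 (Ψ.pminus j))) ∧
  (∀ x y : ℝ, Ψ.v y - Ψ.v x = ∫ t in x..y, Ψ.vd t) ∧
  (∀ j, Ψ.v (s j) = Ψ.z j)

/-- First (pressure) component of `ÂΨ`, namely `−a²ρ₀ v′`. -/
def Ap {n : ℕ} (a ρ₀ : ℝ) (Ψ : State n) : ℝ → ℂ :=
  fun x => -((a ^ 2 * ρ₀ : ℝ) : ℂ) * Ψ.vd x

/-- Second (velocity) component of `ÂΨ`, namely `−ρ₀⁻¹ p_reg′`. -/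
noncomputable def Av {n : ℕ} (ρ₀ : ℝ) (Ψ : State n) : ℝ → ℂ :=
  fun x => -((ρ₀⁻¹ : ℝ) : ℂ) * Ψ.pd x

/-- Third (displacement) component of `ÂΨ`, namely `z`. -/
def Ay {n : ℕ} (Ψ : State n) : Fin n → ℂ := Ψ.z

/-- Fourth (oscillator-velocity) component of `ÂΨ`,
namely `−(Kⱼ/Mⱼ) yⱼ − (S₀/Mⱼ) σⱼ(p)`. -/
noncomputable def Az {n : ℕ} (S₀ : ℝ) (M K : Fin n → ℝ) (Ψ : State n) : Fin n → ℂ :=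
  fun j => -((K j / M j : ℝ) : ℂ) * Ψ.y j - ((S₀ / M j : ℝ) : ℂ) * Ψ.sigma j

/-- The (weighted) inner product on `H = L² ⊕ L² ⊕ ℂⁿ ⊕ ℂⁿ`:
`⟨⟨Ψ₁,Ψ₂⟩⟩ = (a²ρ₀)⁻¹⟨p₁,p₂⟩ + ρ₀⟨v₁,v₂⟩ + S₀⁻¹ Σⱼ (Kⱼ conj(y₁ⱼ) y₂ⱼ + Mⱼ conj(z₁ⱼ) z₂ⱼ)`. -/
noncomputable def ip {n : ℕ} (a ρ₀ S₀ : ℝ) (M K : Fin n → ℝ)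
    (p₁ v₁ : ℝ → ℂ) (y₁ z₁ : Fin n → ℂ)
    (p₂ v₂ : ℝ → ℂ) (y₂ z₂ : Fin n → ℂ) : ℂ :=
  (((a ^ 2 * ρ₀)⁻¹ : ℝ) : ℂ) * ∫ x : ℝ, starRingEnd ℂ (p₁ x) * p₂ x
    + ((ρ₀ : ℝ) : ℂ) * ∫ x : ℝ, starRingEnd ℂ (v₁ x) * v₂ x
    + ((S₀⁻¹ : ℝ) : ℂ) *
        ∑ j, (((K j : ℝ) : ℂ) * starRingEnd ℂ (y₁ j) * y₂ j
               + ((M j : ℝ) : ℂ) * starRingEnd ℂ (z₁ j) * z₂ j)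

section Helpers
open Set

lemma normInt_of_sq (f : ℝ → ℂ) (hf : Integrable (fun x => ‖f x‖ ^ 2)) :
    ∀ a b : ℝ, IntervalIntegrable (fun x => ‖f x‖) volume a b := by
  have hm : AEStronglyMeasurable (fun x => ‖f x‖) volume := by
    have h1 : AEStronglyMeasurable (fun x => ‖f x‖ ^ 2) volume := hf.aestronglyMeasurable
    have := (Real.continuous_sqrt.comp_aestronglyMeasurable h1)
    refine this.congr (Eventually.of_forall fun x => ?_)
    simp [Real.sqrt_sq (norm_nonneg (f x))]
  intro a b
  rw [intervalIntegrable_iff]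
  have hfin : volume (uIoc a b) < ⊤ := by
    rw [uIoc_eq_union]
    refine lt_of_le_of_lt (measure_union_le _ _) ?_
    simp [Real.volume_Ioc]
  have hconst : IntegrableOn (fun _ : ℝ => (1:ℝ)) (uIoc a b) volume :=
    integrableOn_const hfin.ne
  refine Integrable.mono' ((hf.integrableOn).add hconst)
    (hm.restrict) (Eventually.of_forall fun x => ?_)
  have h0 : (0:ℝ) ≤ ‖f x‖ := norm_nonneg _
  simp only [Real.norm_eq_abs, abs_of_nonneg h0, Pi.add_apply]
  nlinarith [sq_nonneg (‖f x‖ - 1)]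

lemma exists_tendsto_of_cauchy (l : Filter ℝ) [l.NeBot] (g : ℝ → ℂ)
    (h : ∀ ε > 0, ∃ t ∈ l, ∀ x ∈ t, ∀ y ∈ t, dist (g x) (g y) < ε) :
    ∃ L, Tendsto g l (𝓝 L) := by
  have hc : Cauchy (map g l) := by
    rw [Metric.cauchy_iff]
    refine ⟨map_neBot, fun ε hε => ?_⟩
    obtain ⟨t, htl, ht⟩ := h ε hε
    exact ⟨g '' t, image_mem_map htl, by
      rintro _ ⟨x, hx, rfl⟩ _ ⟨y, hy, rfl⟩; exact ht x hx y hy⟩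
  obtain ⟨L, hL⟩ := CompleteSpace.complete hc
  exact ⟨L, hL⟩

lemma isolated {n : ℕ} (s : Fin n → ℝ) (t : ℝ) :
    ∃ ε > 0, ∀ k, s k ∈ Metric.ball t ε → s k = t := by
  have hT : IsClosed (Set.range s \ {t}) :=
    ((Set.finite_range s).subset diff_subset).isClosed
  have ht : t ∈ (Set.range s \ {t})ᶜ := fun h => h.2 rfl
  obtain ⟨ε, hε, hball⟩ := Metric.isOpen_iff.1 hT.isOpen_compl t ht
  refine ⟨ε, hε, fun k hk => ?_⟩
  by_contra hne
  exact (hball hk) ⟨⟨k, rfl⟩, hne⟩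

section Limits
variable (g g' : ℝ → ℂ)

lemma key_bound (hint : Integrable (fun x => ‖g' x‖ ^ 2)) (I : Set ℝ)
    (hftc : ∀ x y, x ∈ I → y ∈ I → x ≤ y → g y - g x = ∫ t in x..y, g' t)
    (a : ℝ) :
    ∀ x y, x ∈ I → y ∈ I → x ≤ y →
      dist (g x) (g y) ≤ (∫ t in a..y, ‖g' t‖) - ∫ t in a..x, ‖g' t‖ := by
  have hii := normInt_of_sq g' hint
  intro x y hx hy hxy
  rw [dist_comm, dist_eq_norm, hftc x y hx hy hxy]
  have h1 : ‖∫ t in x..y, g' t‖ ≤ ∫ t in x..y, ‖g' t‖ :=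
    intervalIntegral.norm_integral_le_integral_norm hxy
  have h2 : (∫ t in a..x, ‖g' t‖) + ∫ t in x..y, ‖g' t‖ = ∫ t in a..y, ‖g' t‖ :=
    intervalIntegral.integral_add_adjacent_intervals (hii a x) (hii x y)
  linarith

lemma right_limit (hint : Integrable (fun x => ‖g' x‖ ^ 2))
    (a ε : ℝ) (hε : 0 < ε)
    (hftc : ∀ x y, x ∈ Ioo a (a + ε) → y ∈ Ioo a (a + ε) → x ≤ y →
      g y - g x = ∫ t in x..y, g' t) :
    ∃ L, Tendsto g (𝓝[>] a) (𝓝 L) := by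
  set P : ℝ → ℝ := fun u => ∫ t in a..u, ‖g' t‖ with hPdef
  have key := key_bound g g' hint (Ioo a (a + ε)) hftc a
  have hPc : Continuous P := intervalIntegral.continuous_primitive (normInt_of_sq g' hint) a
  apply exists_tendsto_of_cauchy
  intro η hη
  obtain ⟨δ, hδ, hPd⟩ := Metric.continuousAt_iff.1 (hPc.continuousAt : ContinuousAt P a) (η/2) (by linarith)
  have hm : 0 < min δ ε := lt_min hδ hε
  refine ⟨Ioo a (a + min δ ε), Ioo_mem_nhdsGT_of_mem ⟨le_refl _, by linarith⟩, ?_⟩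
  have hsub : Ioo a (a + min δ ε) ⊆ Ioo a (a + ε) :=
    Ioo_subset_Ioo (le_refl _) (by linarith [min_le_right δ ε])
  have hdista : ∀ x ∈ Ioo a (a + min δ ε), dist x a < δ := by
    intro x hx
    rw [Real.dist_eq, abs_of_pos (by linarith [hx.1])]
    have := hx.2
    have h3 : min δ ε ≤ δ := min_le_left _ _
    linarith
  intro x hx y hy
  have hPx : |P x - P a| < η/2 := by
    have := hPd (hdista x hx); rwa [Real.dist_eq] at this
  have hPy : |P y - P a| < η/2 := by
    have := hPd (hdista y hy); rwa [Real.dist_eq] at this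
  rcases le_total x y with h | h
  · have := key x y (hsub hx) (hsub hy) h
    have h1 := le_abs_self (P y - P a)
    have h2 := neg_abs_le (P x - P a)
    linarith
  · have := key y x (hsub hy) (hsub hx) h
    rw [dist_comm] at this
    have h1 := le_abs_self (P x - P a)
    have h2 := neg_abs_le (P y - P a)
    linarith

lemma left_limit (hint : Integrable (fun x => ‖g' x‖ ^ 2))
    (a ε : ℝ) (hε : 0 < ε)
    (hftc : ∀ x y, x ∈ Ioo (a - ε) a → y ∈ Ioo (a - ε) a → x ≤ y →
      g y - g x = ∫ t in x..y, g' t) :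
    ∃ L, Tendsto g (𝓝[<] a) (𝓝 L) := by
  set P : ℝ → ℝ := fun u => ∫ t in a..u, ‖g' t‖ with hPdef
  have key := key_bound g g' hint (Ioo (a - ε) a) hftc a
  have hPc : Continuous P := intervalIntegral.continuous_primitive (normInt_of_sq g' hint) a
  apply exists_tendsto_of_cauchy
  intro η hη
  obtain ⟨δ, hδ, hPd⟩ := Metric.continuousAt_iff.1 (hPc.continuousAt : ContinuousAt P a) (η/2) (by linarith)
  have hm : 0 < min δ ε := lt_min hδ hε
  refine ⟨Ioo (a - min δ ε) a, Ioo_mem_nhdsLT_of_mem ⟨by linarith, le_refl _⟩, ?_⟩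
  have hsub : Ioo (a - min δ ε) a ⊆ Ioo (a - ε) a :=
    Ioo_subset_Ioo (by linarith [min_le_right δ ε]) (le_refl _)
  have hdista : ∀ x ∈ Ioo (a - min δ ε) a, dist x a < δ := by
    intro x hx
    rw [Real.dist_eq, abs_of_neg (by linarith [hx.2])]
    have := hx.1
    have h3 : min δ ε ≤ δ := min_le_left _ _
    linarith
  intro x hx y hy
  have hPx : |P x - P a| < η/2 := by
    have := hPd (hdista x hx); rwa [Real.dist_eq] at this
  have hPy : |P y - P a| < η/2 := by
    have := hPd (hdista y hy); rwa [Real.dist_eq] at this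
  rcases le_total x y with h | h
  · have := key x y (hsub hx) (hsub hy) h
    have h1 := le_abs_self (P y - P a)
    have h2 := neg_abs_le (P x - P a)
    linarith
  · have := key y x (hsub hy) (hsub hx) h
    rw [dist_comm] at this
    have h1 := le_abs_self (P x - P a)
    have h2 := neg_abs_le (P y - P a)
    linarith

lemma cont_at (hint : Integrable (fun x => ‖g' x‖ ^ 2))
    (t ε : ℝ) (hε : 0 < ε)
    (hftc : ∀ x y, x ∈ Ioo (t - ε) (t + ε) → y ∈ Ioo (t - ε) (t + ε) → x ≤ y →
      g y - g x = ∫ u in x..y, g' u) : ContinuousAt g t := by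
  set P : ℝ → ℝ := fun u => ∫ u' in t..u, ‖g' u'‖ with hPdef
  have key := key_bound g g' hint (Ioo (t - ε) (t + ε)) hftc t
  have hPc : Continuous P := intervalIntegral.continuous_primitive (normInt_of_sq g' hint) t
  rw [Metric.continuousAt_iff]
  intro η hη
  obtain ⟨δ, hδ, hPd⟩ := Metric.continuousAt_iff.1 (hPc.continuousAt : ContinuousAt P t) (η/2) (by linarith)
  refine ⟨min δ ε, lt_min hδ hε, fun {y} hy => ?_⟩
  have hyI : y ∈ Ioo (t - ε) (t + ε) := by
    rw [Real.dist_eq] at hy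
    have h1 := abs_lt.1 (lt_of_lt_of_le hy (min_le_right δ ε))
    constructor <;> linarith [h1.1, h1.2]
  have htI : t ∈ Ioo (t - ε) (t + ε) := by constructor <;> linarith
  have hPy : |P y - P t| < η/2 := by
    have := hPd (lt_of_lt_of_le hy (min_le_left δ ε)); rwa [Real.dist_eq] at this
  rcases le_total y t with h | h
  · have := key y t hyI htI h
    have h1 := neg_abs_le (P y - P t)
    have hPt : P t = 0 := by simp [hPdef]
    linarith
  · have := key t y htI hyI h
    rw [dist_comm] at this
    have h1 := le_abs_self (P y - P t)
    have hPt : P t = 0 := by simp [hPdef]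
    linarith

end Limits

lemma int_sq_const_mul (c : ℂ) (f : ℝ → ℂ) (hf : Integrable (fun x => ‖f x‖ ^ 2)) :
    Integrable (fun x => ‖c * f x‖ ^ 2) := by
  refine (hf.const_mul (‖c‖ ^ 2)).congr (Eventually.of_forall fun x => ?_)
  simp [norm_mul, mul_pow]

lemma aesm_of_contAt {n : ℕ} (s : Fin n → ℝ) (g : ℝ → ℂ)
    (hg : ∀ t, t ∉ Set.range s → ContinuousAt g t) :
    AEStronglyMeasurable g volume := by
  have hms : MeasurableSet ((Set.range s)ᶜ) :=
    (Set.finite_range s).isClosed.measurableSet.compl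
  have hcont : ContinuousOn g ((Set.range s)ᶜ) := fun t ht => (hg t ht).continuousWithinAt
  have h0 : volume (Set.range s) = 0 :=
    Set.Countable.measure_zero (Set.countable_range s) _
  have hae : ∀ᵐ x ∂(volume : Measure ℝ), x ∈ (Set.range s)ᶜ := compl_mem_ae_iff.mpr h0
  have := hcont.aestronglyMeasurable (μ := volume) hms
  rwa [Measure.restrict_eq_self_of_ae_mem hae] at this

end Helpers

/-- Characterization of the domain of `Â²`: for `Ψ = (p,v,y,z) ∈ D(Â)`,
the image `ÂΨ` belongs to `D(Â)` if and only if `v′ ∈ H¹(ℝ∖S)`, `p_reg′ ∈ H¹(ℝ)`, and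
the continuous representative of `p_reg′` satisfies
`p_reg′(sⱼ) = ρ₀((Kⱼ/Mⱼ) yⱼ + (S₀/Mⱼ) σⱼ(p))` for every `j`. -/
theorem mem_domain_A_sq_iff
    (n : ℕ) (s : Fin n → ℝ) (hs : StrictMono s)
    (ρ₀ a S₀ : ℝ) (hρ₀ : 0 < ρ₀) (ha : 0 < a) (hS₀ : 0 < S₀)
    (M K : Fin n → ℝ) (hM : ∀ j, 0 < M j) (hK : ∀ j, 0 < K j)
    (Ψ : State n) (hΨ : InDomain s Ψ) :
    (∃ Φ : State n, InDomain s Φ ∧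
        Φ.p =ᵐ[volume] Ap a ρ₀ Ψ ∧ Φ.v =ᵐ[volume] Av ρ₀ Ψ ∧
        Φ.y = Ay Ψ ∧ Φ.z = Az S₀ M K Ψ)
    ↔
    -- `v′ ∈ H¹(ℝ∖S)`: a representative of `vd` is absolutely continuous on each
    -- interval avoiding `S`, with square-integrable derivative
    ((∃ g g' : ℝ → ℂ, g =ᵐ[volume] Ψ.vd ∧
        Integrable (fun x => ‖g' x‖ ^ 2) ∧
        (∀ x y : ℝ, x ≤ y → (∀ j, s j ∉ Set.Icc x y) →
          g y - g x = ∫ t in x..y, g' t))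
      ∧
      -- `p_reg′ ∈ H¹(ℝ)` and its continuous representative satisfies the boundary
      -- conditions `p_reg′(sⱼ) = ρ₀((Kⱼ/Mⱼ) yⱼ + (S₀/Mⱼ) σⱼ(p))`
      (∃ h h' : ℝ → ℂ, h =ᵐ[volume] Ψ.pd ∧
        Integrable (fun x => ‖h' x‖ ^ 2) ∧
        (∀ x y : ℝ, h y - h x = ∫ t in x..y, h' t) ∧
        (∀ j, h (s j) = ((ρ₀ : ℝ) : ℂ) *
          (((K j / M j : ℝ) : ℂ) * Ψ.y j + ((S₀ / M j : ℝ) : ℂ) * Ψ.sigma j)))) := by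
  obtain ⟨hp2, hv2, hpd2, hvd2, hpm, hpftc, hpp, hpmn, hvftc, hvz⟩ := hΨ
  have hcpos : (0:ℝ) < a ^ 2 * ρ₀ := by positivity
  have hcC : ((a ^ 2 * ρ₀ : ℝ) : ℂ) ≠ 0 := Complex.ofReal_ne_zero.mpr hcpos.ne'
  have hρC : ((ρ₀ : ℝ) : ℂ) ≠ 0 := Complex.ofReal_ne_zero.mpr hρ₀.ne'
  have haC : ((a : ℝ) : ℂ) ≠ 0 := Complex.ofReal_ne_zero.mpr ha.ne'
  constructor
  · rintro ⟨Φ, ⟨hΦp2, hΦv2, hΦpd2, hΦvd2, hΦpm, hΦpftc, hΦpp, hΦpmn, hΦvftc, hΦvz⟩,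
      hΦp, hΦv, hΦy, hΦz⟩
    constructor
    · refine ⟨fun x => -((((a ^ 2 * ρ₀)⁻¹ : ℝ)) : ℂ) * Φ.p x,
        fun x => -((((a ^ 2 * ρ₀)⁻¹ : ℝ)) : ℂ) * Φ.pd x, ?_, ?_, ?_⟩
      · filter_upwards [hΦp] with x hx
        show -((((a ^ 2 * ρ₀)⁻¹ : ℝ)) : ℂ) * Φ.p x = Ψ.vd x
        rw [hx]
        simp only [Ap]
        push_cast
        field_simp
      · exact int_sq_const_mul _ _ hΦpd2
      · intro x y hxy hs'
        show -((((a ^ 2 * ρ₀)⁻¹ : ℝ)) : ℂ) * Φ.p y - -((((a ^ 2 * ρ₀)⁻¹ : ℝ)) : ℂ) * Φ.p x = _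
        rw [intervalIntegral.integral_const_mul, ← hΦpftc x y hxy hs']
        ring
    · refine ⟨fun x => -((ρ₀ : ℝ) : ℂ) * Φ.v x, fun x => -((ρ₀ : ℝ) : ℂ) * Φ.vd x,
        ?_, ?_, ?_, ?_⟩
      · filter_upwards [hΦv] with x hx
        show -((ρ₀ : ℝ) : ℂ) * Φ.v x = Ψ.pd x
        rw [hx]
        simp only [Av]
        push_cast
        field_simp
      · exact int_sq_const_mul _ _ hΦvd2
      · intro x y
        show -((ρ₀ : ℝ) : ℂ) * Φ.v y - -((ρ₀ : ℝ) : ℂ) * Φ.v x = _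
        rw [intervalIntegral.integral_const_mul, ← hΦvftc x y]
        ring
      · intro j
        show -((ρ₀ : ℝ) : ℂ) * Φ.v (s j) = _
        rw [hΦvz j, hΦz]
        simp only [Az]
        push_cast
        ring
  · rintro ⟨⟨g, g', hgae, hg'2, hgftc⟩, h, h', hhae, hh'2, hhftc, hhbc⟩
    have hR : ∀ j : Fin n, ∃ L, Tendsto g (𝓝[>] (s j)) (𝓝 L) := by
      intro j
      obtain ⟨ε, hε, hball⟩ := isolated s (s j)
      refine right_limit g g' hg'2 (s j) ε hε (fun x y hx hy hxy => hgftc x y hxy ?_)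
      intro k hk
      have hbk : s k ∈ Metric.ball (s j) ε := by
        rw [Metric.mem_ball, Real.dist_eq,
          abs_of_pos (by linarith [hx.1, hk.1] : (0:ℝ) < s k - s j)]
        linarith [hk.2, hy.2]
      have heq := hball k hbk
      linarith [hx.1, hk.1, heq.le]
    have hLe : ∀ j : Fin n, ∃ L, Tendsto g (𝓝[<] (s j)) (𝓝 L) := by
      intro j
      obtain ⟨ε, hε, hball⟩ := isolated s (s j)
      refine left_limit g g' hg'2 (s j) ε hε (fun x y hx hy hxy => hgftc x y hxy ?_)
      intro k hk
      have hbk : s k ∈ Metric.ball (s j) ε := by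
        rw [Metric.mem_ball, Real.dist_eq,
          abs_of_neg (by linarith [hy.2, hk.2] : s k - s j < 0)]
        linarith [hk.1, hx.1]
      have heq := hball k hbk
      linarith [hy.2, hk.2, heq.ge]
    have hgc : ∀ t, t ∉ Set.range s → ContinuousAt g t := by
      intro t ht
      obtain ⟨ε, hε, hball⟩ := isolated s t
      refine cont_at g g' hg'2 t ε hε (fun x y hx hy hxy => hgftc x y hxy ?_)
      intro k hk
      have hbk : s k ∈ Metric.ball t ε := by
        rw [Metric.mem_ball, Real.dist_eq, abs_lt]
        constructor <;> linarith [hx.1, hk.1, hk.2, hy.2]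
      exact ht ⟨k, hball k hbk⟩
    have hgm : AEStronglyMeasurable g volume := aesm_of_contAt s g hgc
    choose Lp hLp using hR
    choose Lm hLm using hLe
    refine ⟨⟨fun x => -((a ^ 2 * ρ₀ : ℝ) : ℂ) * g x,
             fun x => -((ρ₀⁻¹ : ℝ) : ℂ) * h x,
             Ψ.z, Az S₀ M K Ψ,
             fun x => -((a ^ 2 * ρ₀ : ℝ) : ℂ) * g' x,
             fun x => -((ρ₀⁻¹ : ℝ) : ℂ) * h' x,
             fun j => -((a ^ 2 * ρ₀ : ℝ) : ℂ) * Lp j,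
             fun j => -((a ^ 2 * ρ₀ : ℝ) : ℂ) * Lm j⟩,
      ⟨?_, ?_, ?_, ?_, ?_, ?_, ?_, ?_, ?_, ?_⟩, ?_, ?_, rfl, rfl⟩
    · refine (int_sq_const_mul (-((a ^ 2 * ρ₀ : ℝ) : ℂ)) Ψ.vd hvd2).congr ?_
      filter_upwards [hgae] with x hx
      rw [hx]
    · refine (int_sq_const_mul (-((ρ₀⁻¹ : ℝ) : ℂ)) Ψ.pd hpd2).congr ?_
      filter_upwards [hhae] with x hx
      rw [hx]
    · exact int_sq_const_mul _ _ hg'2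
    · exact int_sq_const_mul _ _ hh'2
    · exact hgm.const_mul _
    · intro x y hxy hs'
      show -((a ^ 2 * ρ₀ : ℝ) : ℂ) * g y - -((a ^ 2 * ρ₀ : ℝ) : ℂ) * g x = _
      rw [intervalIntegral.integral_const_mul, ← hgftc x y hxy hs']
      ring
    · exact fun j => (hLp j).const_mul _
    · exact fun j => (hLm j).const_mul _
    · intro x y
      show -((ρ₀⁻¹ : ℝ) : ℂ) * h y - -((ρ₀⁻¹ : ℝ) : ℂ) * h x = _
      rw [intervalIntegral.integral_const_mul, ← hhftc x y]
      ring
    · intro j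
      have hMC : ((M j : ℝ) : ℂ) ≠ 0 := Complex.ofReal_ne_zero.mpr (hM j).ne'
      show -((ρ₀⁻¹ : ℝ) : ℂ) * h (s j) = Az S₀ M K Ψ j
      rw [hhbc j]
      simp only [Az]
      push_cast
      field_simp
      ring
    · filter_upwards [hgae] with x hx
      show -((a ^ 2 * ρ₀ : ℝ) : ℂ) * g x = Ap a ρ₀ Ψ x
      rw [hx]
      simp only [Ap]
    · filter_upwards [hhae] with x hx
      show -((ρ₀⁻¹ : ℝ) : ℂ) * h x = Av ρ₀ Ψ x
      rw [hx]
      simp only [Av]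


end BubbleAcoustics
end

section
/- Weak formulation of the n-oscillator system: fix n, points s₁ < … < sₙ, positive constants a, ρ₀, S₀, Mⱼ, Kⱼ. Suppose v : [0,∞) × ℝ → ℝ and zⱼ : [0,∞) → ℝ (j = 1,…,n) satisfy: v is C² in t with values in L²(ℝ), C¹ in t with values in H¹(ℝ), and for each t, v(t,·) restricted to each interval between consecutive sⱼ is H² there, with ζⱼ(t) := ∂v/∂x(t, sⱼ⁺) − ∂v/∂x(t, sⱼ⁻); the equations ∂²v/∂t² = a² ∂/∂x (∂v/∂x)_reg (where (∂v/∂x)_reg(t,x) = ∂v/∂x(t,x) − ½ Σⱼ ζⱼ(t) sgn(x − sⱼ)), Mⱼ zⱼ″ + Kⱼ zⱼ = a²ρ₀S₀ ζⱼ, v(t, sⱼ) = zⱼ(t) hold, together with zⱼ′(0) = 0 for all j. Then for every continuously differentiable, compactly supported g : ℝ × ℝ → ℝ: −∫₀^∞ ⟨∂v/∂t(t,·), ∂g/∂t(t,·)⟩ dt − ⟨∂v/∂t(0,·), g(0,·)⟩ = −a² ∫₀^∞ ⟨∂v/∂x(t,·), ∂g/∂x(t,·)⟩ dt + (ρ₀S₀)⁻¹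 ∫₀^∞ Σⱼ Mⱼ zⱼ′(t) ∂g/∂t(t, sⱼ) dt − (ρ₀S₀)⁻¹ ∫₀^∞ Σⱼ Kⱼ zⱼ(t) g(t, sⱼ) dt. -/
open MeasureTheory Filter Topology

section WeakFormulationAux
open Set



lemma slice_int {f h : ℝ → ℝ} {C R : ℝ}
    (hf : AEStronglyMeasurable f volume) (hfsq : Integrable (fun x => f x ^ 2))
    (hhm : AEStronglyMeasurable h volume)
    (hC : ∀ x, |h x| ≤ C) (hR : ∀ x, h x ≠ 0 → |x| ≤ R) :
    Integrable (fun x => f x * h x) := by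
  have hC0 : 0 ≤ C := le_trans (abs_nonneg _) (hC 0)
  have hdom' : IntegrableOn (fun x => C * (f x ^ 2 + 1) / 2) (Icc (-R) R) volume := by
    have h1 : IntegrableOn (fun x => f x ^ 2 + 1) (Icc (-R) R) volume :=
      hfsq.integrableOn.add (integrableOn_const measure_Icc_lt_top.ne)
    exact (h1.const_mul C).div_const 2
  have hdom : Integrable
      (fun x => Set.indicator (Icc (-R) R) (fun x => C * (f x ^ 2 + 1) / 2) x) :=
    hdom'.integrable_indicator measurableSet_Icc
  refine hdom.mono' (hf.mul hhm) (Eventually.of_forall fun x => ?_)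
  by_cases hx : h x = 0
  · simp only [hx, mul_zero, norm_zero]
    apply Set.indicator_nonneg
    intro y _
    positivity
  · have hxR : x ∈ Icc (-R) R := Set.mem_Icc.mpr (abs_le.mp (hR x hx))
    rw [Set.indicator_of_mem hxR]
    have h1 : ‖f x * h x‖ = |f x| * |h x| := by
      rw [Real.norm_eq_abs, abs_mul]
    rw [h1]
    have h2 : |f x| * |h x| ≤ |f x| * C := by
      exact mul_le_mul_of_nonneg_left (hC x) (abs_nonneg _)
    refine h2.trans ?_
    have h3 : |f x| ^ 2 = f x ^ 2 := sq_abs _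
    nlinarith [abs_nonneg (f x), sq_nonneg (|f x| - 1)]

lemma prod_int {f h : ℝ → ℝ → ℝ} {c C R : ℝ} (hc : 0 ≤ c) (hR0 : 0 ≤ R)
    (hf : AEStronglyMeasurable (fun q : ℝ × ℝ => f q.1 q.2) (volume.prod volume))
    (hfsq : ∀ t, Integrable (fun x => f t x ^ 2))
    (hfc : ∀ t, (∫ x, f t x ^ 2) ≤ c)
    (hh : Continuous fun q : ℝ × ℝ => h q.1 q.2)
    (hC : ∀ t x, |h t x| ≤ C)
    (hhR : ∀ t x, h t x ≠ 0 → |t| ≤ R ∧ |x| ≤ R) :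
    Integrable (fun q : ℝ × ℝ => f q.1 q.2 * h q.1 q.2) (volume.prod volume) := by
  have hC0 : 0 ≤ C := le_trans (abs_nonneg _) (hC 0 0)
  have hmeas : AEStronglyMeasurable (fun q : ℝ × ℝ => f q.1 q.2 * h q.1 q.2)
      (volume.prod volume) := hf.mul hh.aestronglyMeasurable
  rw [integrable_prod_iff hmeas]
  constructor
  · filter_upwards [hf.prodMk_left] with t ht
    exact slice_int ht (hfsq t)
      ((hh.comp (Continuous.prodMk_right t)).aestronglyMeasurable)
      (hC t) (fun x hx => (hhR t x hx).2)
  · have hB0 : 0 ≤ C * (c + 2 * R) / 2 := by positivity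
    have hdomB : IntegrableOn (fun _ : ℝ => C * (c + 2 * R) / 2) (Icc (-R) R) volume :=
      integrableOn_const measure_Icc_lt_top.ne
    refine Integrable.mono' (hdomB.integrable_indicator measurableSet_Icc)
      (hmeas.norm.integral_prod_right') ?_
    refine Eventually.of_forall fun t => ?_
    by_cases ht : |t| ≤ R
    · rw [Set.indicator_of_mem (Set.mem_Icc.mpr (abs_le.mp ht))]
      simp only []
      have hnn : 0 ≤ ∫ x, ‖f t x * h t x‖ := integral_nonneg fun x => norm_nonneg _
      rw [Real.norm_eq_abs, abs_of_nonneg hnn]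
      have hdom' : IntegrableOn (fun x => C * (f t x ^ 2 + 1) / 2) (Icc (-R) R) volume := by
        have h1 : IntegrableOn (fun x => f t x ^ 2 + 1) (Icc (-R) R) volume :=
          (hfsq t).integrableOn.add (integrableOn_const measure_Icc_lt_top.ne)
        exact (h1.const_mul C).div_const 2
      have hdom : Integrable
          (fun x => Set.indicator (Icc (-R) R) (fun x => C * (f t x ^ 2 + 1) / 2) x) :=
        hdom'.integrable_indicator measurableSet_Icc
      have hle : ∫ x, ‖f t x * h t x‖ ≤
          ∫ x, Set.indicator (Icc (-R) R) (fun x => C * (f t x ^ 2 + 1) / 2) x := by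
        refine integral_mono_of_nonneg (Eventually.of_forall fun x => norm_nonneg _) hdom
          (Eventually.of_forall fun x => ?_)
        by_cases hx : h t x = 0
        · simp only [hx, mul_zero, norm_zero]
          exact Set.indicator_nonneg (fun y _ => by positivity) x
        · have hxR : x ∈ Icc (-R) R := Set.mem_Icc.mpr (abs_le.mp (hhR t x hx).2)
          rw [Set.indicator_of_mem hxR]
          simp only [Real.norm_eq_abs, abs_mul]
          have h2 : |f t x| * |h t x| ≤ |f t x| * C :=
            mul_le_mul_of_nonneg_left (hC t x) (abs_nonneg _)
          refine h2.trans ?_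
          nlinarith [abs_nonneg (f t x), sq_nonneg (|f t x| - 1), sq_abs (f t x)]
      refine hle.trans ?_
      rw [integral_indicator measurableSet_Icc]
      have hsplit : ∫ x in Icc (-R) R, C * (f t x ^ 2 + 1) / 2
          = (C / 2) * ((∫ x in Icc (-R) R, f t x ^ 2) + ∫ x in Icc (-R) R, (1 : ℝ)) := by
        rw [← integral_add ((hfsq t).integrableOn) (integrableOn_const
          measure_Icc_lt_top.ne), ← integral_const_mul]
        congr 1; ext x; ring
      rw [hsplit]
      have h1 : ∫ x in Icc (-R) R, f t x ^ 2 ≤ c :=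
        le_trans (setIntegral_le_integral (hfsq t)
          (Eventually.of_forall fun x => sq_nonneg _)) (hfc t)
      have h2 : ∫ x in Icc (-R) R, (1 : ℝ) ≤ 2 * R := by
        rw [setIntegral_const, smul_eq_mul, mul_one, measureReal_def, Real.volume_Icc]
        rw [ENNReal.toReal_ofReal (by linarith)]
        linarith
      calc (C / 2) * ((∫ x in Icc (-R) R, f t x ^ 2) + ∫ x in Icc (-R) R, (1 : ℝ))
          ≤ (C / 2) * (c + 2 * R) := by
            apply mul_le_mul_of_nonneg_left _ (by positivity)
            exact add_le_add h1 h2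
        _ = C * (c + 2 * R) / 2 := by ring
    · have hzero : ∀ x, ‖f t x * h t x‖ = 0 := by
        intro x
        by_cases hx : h t x = 0
        · simp [hx]
        · exact absurd (hhR t x hx).1 ht
      have : (fun x => ‖f t x * h t x‖) = fun _ => (0 : ℝ) := funext hzero
      rw [this, integral_zero]
      simp only [norm_zero]
      exact Set.indicator_nonneg (fun y _ => hB0) t


lemma parts_x {D F G G' : ℝ → ℝ} {R₁ : ℝ} (hR₁ : 0 < R₁)
    (hD : AEStronglyMeasurable D volume) (hDsq : Integrable (fun x => D x ^ 2))
    (hF : ∀ x y : ℝ, F y - F x = ∫ ξ in x..y, D ξ)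
    (hG : ∀ x, HasDerivAt G (G' x) x) (hG'c : Continuous G')
    (hGR : ∀ x, R₁ ≤ |x| → G x = 0) :
    ∫ x, D x * G x = - ∫ x, F x * G' x := by
  -- local integrability of D
  have hDs : ∀ u : Set ℝ, MeasurableSet u → volume u < ⊤ → IntegrableOn D u volume := by
    intro u hu hufin
    have hdom : IntegrableOn (fun x => (D x ^ 2 + 1) / 2) u volume :=
      (hDsq.integrableOn.add (integrableOn_const hufin.ne)).div_const 2
    refine hdom.mono' (hD.restrict) (Eventually.of_forall fun x => ?_)
    rw [Real.norm_eq_abs]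
    nlinarith [sq_abs (D x), sq_nonneg (|D x| - 1), abs_nonneg (D x)]
  have hDint : ∀ a b : ℝ, IntervalIntegrable D volume a b := by
    intro a b
    rw [intervalIntegrable_iff]
    exact hDs _ measurableSet_uIoc measure_Ioc_lt_top
  -- G' vanishes outside [-R₁, R₁]
  have hG'R : ∀ x : ℝ, R₁ < |x| → G' x = 0 := by
    intro x hx
    have hev : G =ᶠ[𝓝 x] fun _ => (0 : ℝ) := by
      have hopen : IsOpen {y : ℝ | R₁ < |y|} := isOpen_lt continuous_const continuous_abs
      filter_upwards [hopen.mem_nhds hx] with y hy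
      exact hGR y (le_of_lt hy)
    have h1 : G' x = deriv G x := (hG x).deriv.symm
    rw [h1, hev.deriv_eq]
    simp
  have hG'supp : HasCompactSupport G' := by
    refine HasCompactSupport.intro (isCompact_Icc (a := -R₁) (b := R₁)) fun x hx => ?_
    refine hG'R x ?_
    rcases not_and_or.mp ((Set.mem_Icc).not.mp hx) with h | h
    · rw [abs_of_neg (by linarith [not_le.mp h])]; linarith [not_le.mp h]
    · rw [abs_of_pos (by linarith [not_le.mp h])]; exact not_le.mp h
  obtain ⟨CG, hCG⟩ := hG'supp.exists_bound_of_continuous hG'c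
  have hCG0 : 0 ≤ CG := le_trans (norm_nonneg _) (hCG 0)
  -- continuity of F
  have hFeq : F = fun y => (∫ ξ in (0:ℝ)..y, D ξ) + F 0 := by
    funext y
    have := hF 0 y
    linarith
  have hFcont : Continuous F := by
    rw [hFeq]
    exact (intervalIntegral.continuous_primitive hDint 0).add continuous_const
  -- the finite restricted measure
  set ν : Measure ℝ := volume.restrict (Ioc (-R₁) R₁) with hν
  haveI hνfin : IsFiniteMeasure ν := by
    constructor
    rw [hν, Measure.restrict_apply_univ]
    exact measure_Ioc_lt_top
  -- G as integral of G'
  have hGx : ∀ x ∈ Ioc (-R₁) R₁, G x = ∫ y, (Set.Iic x).indicator G' y ∂ν := by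
    intro x hx
    have h1 : ∫ y in (-R₁)..x, G' y = G x - G (-R₁) :=
      intervalIntegral.integral_eq_sub_of_hasDerivAt (fun y _ => hG y)
        (hG'c.intervalIntegrable _ _)
    have h2 : G (-R₁) = 0 := hGR _ (by rw [abs_neg, abs_of_pos hR₁])
    have h3 : ∫ y, (Set.Iic x).indicator G' y ∂ν = ∫ y in Iic x, G' y ∂ν :=
      integral_indicator measurableSet_Iic
    have h4 : ν.restrict (Iic x) = volume.restrict (Ioc (-R₁) x) := by
      rw [hν, Measure.restrict_restrict measurableSet_Iic]
      congr 1
      ext y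
      simp only [Set.mem_inter_iff, Set.mem_Iic, Set.mem_Ioc]
      constructor
      · rintro ⟨h5, h6, h7⟩; exact ⟨h6, h5⟩
      · rintro ⟨h5, h6⟩; exact ⟨h6, h5, le_trans h6 hx.2⟩
    rw [h3, h4, ← intervalIntegral.integral_of_le hx.1.le, h1, h2, sub_zero]
  -- the kernel Ψ and its integrability
  set Ψ : ℝ × ℝ → ℝ := fun p => D p.1 * (Set.Iic p.1).indicator G' p.2 with hΨ
  have hΨmeas : AEStronglyMeasurable Ψ (ν.prod ν) := by
    have h1 : AEStronglyMeasurable (fun p : ℝ × ℝ => D p.1) (ν.prod ν) := hD.restrict.comp_fst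
    have h2 : StronglyMeasurable (fun p : ℝ × ℝ => (Set.Iic p.1).indicator G' p.2) := by
      have hset : MeasurableSet {p : ℝ × ℝ | p.2 ≤ p.1} :=
        (isClosed_le continuous_snd continuous_fst).measurableSet
      have heq : (fun p : ℝ × ℝ => (Set.Iic p.1).indicator G' p.2)
          = Set.indicator {p : ℝ × ℝ | p.2 ≤ p.1} (fun p => G' p.2) := by
        funext p
        by_cases h : p.2 ≤ p.1 <;> simp [Set.indicator, h]
      rw [heq]
      exact ((hG'c.comp continuous_snd).stronglyMeasurable).indicator hset
    exact h1.mul h2.aestronglyMeasurable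
  have hΨint : Integrable Ψ (ν.prod ν) := by
    have hDν : Integrable D ν := hDs _ measurableSet_Ioc measure_Ioc_lt_top
    have hdom : Integrable (fun p : ℝ × ℝ => ‖D p.1‖ * CG) (ν.prod ν) := by
      rw [integrable_prod_iff (hDν.norm.aestronglyMeasurable.comp_fst.mul_const CG)]
      constructor
      · exact Eventually.of_forall fun x => by
          simpa using integrable_const (μ := ν) (‖D x‖ * CG)
      · simp only [integral_const, smul_eq_mul]
        exact ((hDν.norm.mul_const CG).norm).const_mul _
    refine hdom.mono' hΨmeas (Eventually.of_forall fun p => ?_)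
    rw [hΨ]
    simp only [norm_mul]
    apply mul_le_mul_of_nonneg_left _ (norm_nonneg _)
    by_cases h : p.2 ∈ Set.Iic p.1
    · rw [Set.indicator_of_mem h]; exact hCG _
    · rw [Set.indicator_of_notMem h]; simp [hCG0]
  -- main computation
  have step1 : ∫ x, D x * G x ∂ν = ∫ x, (∫ y, Ψ (x, y) ∂ν) ∂ν := by
    refine integral_congr_ae ?_
    filter_upwards [ae_restrict_mem measurableSet_Ioc] with x hx
    rw [hGx x hx, ← integral_const_mul]
  have step2 : ∫ x, (∫ y, Ψ (x, y) ∂ν) ∂ν = ∫ y, (∫ x, Ψ (x, y) ∂ν) ∂ν :=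
    integral_integral_swap (by exact hΨint)
  have step3 : ∀ y ∈ Ioc (-R₁) R₁, ∫ x, Ψ (x, y) ∂ν = (F R₁ - F y) * G' y := by
    intro y hy
    have hΨy : ∀ x : ℝ, Ψ (x, y) = (Set.Ici y).indicator D x * G' y := by
      intro x
      show D x * (Set.Iic x).indicator G' y = (Set.Ici y).indicator D x * G' y
      by_cases h : y ≤ x <;> simp [Set.indicator, h, mul_comm]
    simp_rw [hΨy]
    rw [integral_mul_const]
    congr 1
    rw [integral_indicator measurableSet_Ici]
    have h4 : ν.restrict (Ici y) = volume.restrict (Icc y R₁) := by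
      rw [hν, Measure.restrict_restrict measurableSet_Ici]
      congr 1
      ext x
      simp only [Set.mem_inter_iff, Set.mem_Ici, Set.mem_Ioc, Set.mem_Icc]
      constructor
      · rintro ⟨h5, _, h7⟩; exact ⟨h5, h7⟩
      · rintro ⟨h5, h6⟩; exact ⟨h5, lt_of_lt_of_le hy.1 h5, h6⟩
    rw [h4, Measure.restrict_congr_set Ioc_ae_eq_Icc.symm,
      ← intervalIntegral.integral_of_le hy.2, ← hF y R₁]
  have step4 : ∫ y, (∫ x, Ψ (x, y) ∂ν) ∂ν = ∫ y, (F R₁ - F y) * G' y ∂ν := by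
    refine integral_congr_ae ?_
    filter_upwards [ae_restrict_mem measurableSet_Ioc] with y hy
    exact step3 y hy
  have hG'ν : ∫ y, G' y ∂ν = 0 := by
    have h1 : ∫ y in (-R₁)..R₁, G' y = G R₁ - G (-R₁) :=
      intervalIntegral.integral_eq_sub_of_hasDerivAt (fun y _ => hG y)
        (hG'c.intervalIntegrable _ _)
    have h2 : G R₁ = 0 := hGR _ (by rw [abs_of_pos hR₁])
    have h3 : G (-R₁) = 0 := hGR _ (by rw [abs_neg, abs_of_pos hR₁])
    rw [hν, ← intervalIntegral.integral_of_le (by linarith), h1, h2, h3, sub_zero]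
  have step5 : ∫ y, (F R₁ - F y) * G' y ∂ν = - ∫ y, F y * G' y ∂ν := by
    have hsub : ∀ y : ℝ, (F R₁ - F y) * G' y = G' y * F R₁ - F y * G' y := by
      intro y; ring
    simp_rw [hsub]
    rw [integral_sub (by exact (hG'c.mul continuous_const).integrableOn_Ioc : Integrable (fun y => G' y * F R₁) ν)
      (by exact (hFcont.mul hG'c).integrableOn_Ioc : Integrable (fun y => F y * G' y) ν), integral_mul_const, hG'ν, zero_mul, zero_sub]
  -- lift to the whole line
  have lift1 : ∫ x, D x * G x ∂ν = ∫ x, D x * G x := by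
    rw [hν]
    refine setIntegral_eq_integral_of_forall_compl_eq_zero fun x hx => ?_
    have : G x = 0 := by
      refine hGR x ?_
      rcases not_and_or.mp ((Set.mem_Ioc).not.mp hx) with h | h
      · push_neg at h; rw [abs_of_nonpos (by linarith)]; linarith
      · push_neg at h; rw [abs_of_pos (hR₁.trans h)]; exact h.le
    rw [this, mul_zero]
  have lift2 : ∫ y, F y * G' y ∂ν = ∫ y, F y * G' y := by
    rw [hν]
    refine setIntegral_eq_integral_of_ae_compl_eq_zero ?_
    have hne : ∀ᵐ y : ℝ, y ≠ -R₁ := by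
      rw [ae_iff]
      have : {y : ℝ | ¬ y ≠ -R₁} = {-R₁} := by ext y; simp
      rw [this]
      exact measure_singleton _
    filter_upwards [hne] with y hy hyc
    have : G' y = 0 := by
      refine hG'R y ?_
      rcases not_and_or.mp ((Set.mem_Ioc).not.mp hyc) with h | h
      · push_neg at h
        have hlt : y < -R₁ := lt_of_le_of_ne h hy
        rw [abs_of_neg (by linarith)]; linarith
      · push_neg at h; rw [abs_of_pos (hR₁.trans h)]; exact h
    rw [this, mul_zero]
  rw [← lift1, step1, step2, step4, step5, lift2]


end WeakFormulationAux

/-- Weak formulation of the `n`-oscillator system.  Here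
`v : ℝ → ℝ → ℝ` (time first) with time derivatives `vt`, `vtt`, spatial derivative `vx`
off the walls with one-sided limits `vxp j t = ∂v/∂x(t,sⱼ⁺)`, `vxm j t = ∂v/∂x(t,sⱼ⁻)`,
jumps `ζⱼ(t) = vxp j t − vxm j t`, regular part
`(∂v/∂x)_reg(t,x) = ∂v/∂x(t,x) − ½ Σⱼ ζⱼ(t) sgn(x − sⱼ)` with spatial derivative `D2`;
`z j` are the oscillator velocities, with `zp j = zⱼ′`, `zpp j = zⱼ″`.  Under the
evolution equations and the stated regularity, testing against any `C¹` compactly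
supported `g` yields the weak identity of the paper. -/
theorem weak_formulation
    (n : ℕ) (s : Fin n → ℝ) (hs : StrictMono s)
    (ρ₀ a S₀ : ℝ) (hρ₀ : 0 < ρ₀) (ha : 0 < a) (hS₀ : 0 < S₀)
    (M K : Fin n → ℝ) (hM : ∀ j, 0 < M j) (hK : ∀ j, 0 < K j)
    (v vt vtt vx D2 : ℝ → ℝ → ℝ) (vxp vxm : Fin n → ℝ → ℝ)
    (z zp zpp : Fin n → ℝ → ℝ)
    -- time derivatives of the velocity field
    (hvt : ∀ t x, HasDerivAt (fun τ => v τ x) (vt t x) t)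
    (hvtt : ∀ t x, HasDerivAt (fun τ => vt τ x) (vtt t x) t)
    -- spatial derivative off the walls
    (hvx : ∀ t x, (∀ j, x ≠ s j) → HasDerivAt (fun ξ => v t ξ) (vx t x) x)
    -- one-sided limits of ∂v/∂x at the walls
    (hvxp : ∀ j t, Tendsto (fun ξ => vx t ξ) (𝓝[>] (s j)) (𝓝 (vxp j t)))
    (hvxm : ∀ j t, Tendsto (fun ξ => vx t ξ) (𝓝[<] (s j)) (𝓝 (vxm j t)))
    -- (∂v/∂x)_reg is absolutely continuous in `x` with derivative `D2`
    (hreg : ∀ t x y : ℝ,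
      (vx t y - 2⁻¹ * ∑ j, (vxp j t - vxm j t) * Real.sign (y - s j))
        - (vx t x - 2⁻¹ * ∑ j, (vxp j t - vxm j t) * Real.sign (x - s j))
        = ∫ ξ in x..y, D2 t ξ)
    -- the field equation ∂²v/∂t² = a² ∂/∂x (∂v/∂x)_reg
    (heq : ∀ t, ∀ᵐ x : ℝ, vtt t x = a ^ 2 * D2 t x)
    -- oscillator equations Mⱼ zⱼ″ + Kⱼ zⱼ = a²ρ₀S₀ ζⱼ and boundary conditions
    (hzp : ∀ j t, HasDerivAt (z j) (zp j t) t)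
    (hzpp : ∀ j t, HasDerivAt (zp j) (zpp j t) t)
    (hosc : ∀ j t, M j * zpp j t + K j * z j t = a ^ 2 * ρ₀ * S₀ * (vxp j t - vxm j t))
    (hbc : ∀ j t, v t (s j) = z j t)
    (hbc' : ∀ j t, vt t (s j) = zp j t)
    (hz0 : ∀ j, zp j 0 = 0)
    -- regularity and integrability (v ∈ C²(ℝ;L²) ∩ C¹(ℝ;H¹), H² between the walls)
    (hvcont : Continuous fun q : ℝ × ℝ => v q.1 q.2)
    (hvtcont : Continuous fun q : ℝ × ℝ => vt q.1 q.2)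
    (hvttm : AEStronglyMeasurable (fun q : ℝ × ℝ => vtt q.1 q.2) volume)
    (hvxm' : AEStronglyMeasurable (fun q : ℝ × ℝ => vx q.1 q.2) volume)
    (hD2m : AEStronglyMeasurable (fun q : ℝ × ℝ => D2 q.1 q.2) volume)
    (hL2 : ∀ t, Integrable (fun x => (v t x) ^ 2) ∧ Integrable (fun x => (vt t x) ^ 2) ∧
      Integrable (fun x => (vtt t x) ^ 2) ∧ Integrable (fun x => (vx t x) ^ 2) ∧
      Integrable (fun x => (D2 t x) ^ 2))
    (hbdd : ∃ c : ℝ, ∀ t, (∫ x : ℝ, (v t x) ^ 2) ≤ c ∧ (∫ x : ℝ, (vt t x) ^ 2) ≤ c ∧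
      (∫ x : ℝ, (vtt t x) ^ 2) ≤ c ∧ (∫ x : ℝ, (vx t x) ^ 2) ≤ c ∧
      (∫ x : ℝ, (D2 t x) ^ 2) ≤ c)
    -- the test function
    (g : ℝ → ℝ → ℝ)
    (hg : ContDiff ℝ 1 fun q : ℝ × ℝ => g q.1 q.2)
    (hgsupp : HasCompactSupport fun q : ℝ × ℝ => g q.1 q.2) :
    -(∫ t in Set.Ioi (0 : ℝ), ∫ x : ℝ, vt t x * deriv (fun τ => g τ x) t)
        - (∫ x : ℝ, vt 0 x * g 0 x)
      = -(a ^ 2) * (∫ t in Set.Ioi (0 : ℝ), ∫ x : ℝ, vx t x * deriv (fun ξ => g t ξ) x)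
        + (ρ₀ * S₀)⁻¹ *
            (∫ t in Set.Ioi (0 : ℝ), ∑ j, M j * zp j t * deriv (fun τ => g τ (s j)) t)
        - (ρ₀ * S₀)⁻¹ * (∫ t in Set.Ioi (0 : ℝ), ∑ j, K j * z j t * g t (s j)) := by
  classical
  obtain ⟨c, hc⟩ := hbdd
  have hc0 : 0 ≤ c := le_trans (integral_nonneg fun x => sq_nonneg _) (hc 0).1
  set gg : ℝ × ℝ → ℝ := fun q => g q.1 q.2 with hggdef
  obtain ⟨R0, hR0⟩ := hgsupp.isBounded.subset_closedBall 0
  set R : ℝ := max R0 0 + 1 with hRdef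
  have hRpos : (0 : ℝ) < R := by
    have := le_max_right R0 0; rw [hRdef]; linarith
  have hball : ∀ q : ℝ × ℝ, q ∈ tsupport gg → |q.1| ≤ R ∧ |q.2| ≤ R := by
    intro q hq
    have h1 := hR0 hq
    rw [Metric.mem_closedBall, dist_zero_right, Prod.norm_def] at h1
    have h2 : ‖q.1‖ ≤ R0 := le_trans le_sup_left h1
    have h3 : ‖q.2‖ ≤ R0 := le_trans le_sup_right h1
    rw [Real.norm_eq_abs] at h2 h3
    constructor
    · refine h2.trans ?_; rw [hRdef]; have := le_max_left R0 0; linarith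
    · refine h3.trans ?_; rw [hRdef]; have := le_max_left R0 0; linarith
  have hgz : ∀ t x : ℝ, ¬(|t| ≤ R ∧ |x| ≤ R) → g t x = 0 := by
    intro t x h
    have : (t, x) ∉ tsupport gg := fun hmem => h (hball _ hmem)
    exact image_eq_zero_of_notMem_tsupport (f := gg) this
  -- derivatives of the test function
  have hgdiff : Differentiable ℝ gg := hg.differentiable one_ne_zero
  set gt' : ℝ → ℝ → ℝ := fun t x => fderiv ℝ gg (t, x) (1, 0) with hgt'def
  set gx' : ℝ → ℝ → ℝ := fun t x => fderiv ℝ gg (t, x) (0, 1) with hgx'def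
  have hgt : ∀ t x : ℝ, HasDerivAt (fun τ => g τ x) (gt' t x) t := by
    intro t x
    have h1 : HasDerivAt (fun τ : ℝ => (τ, x)) ((1 : ℝ), (0 : ℝ)) t :=
      (hasDerivAt_id t).prodMk (hasDerivAt_const t x)
    exact (hgdiff (t, x)).hasFDerivAt.comp_hasDerivAt t h1
  have hgx : ∀ t x : ℝ, HasDerivAt (fun ξ => g t ξ) (gx' t x) x := by
    intro t x
    have h1 : HasDerivAt (fun ξ : ℝ => (t, ξ)) ((0 : ℝ), (1 : ℝ)) x :=
      (hasDerivAt_const x t).prodMk (hasDerivAt_id x)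
    exact (hgdiff (t, x)).hasFDerivAt.comp_hasDerivAt x h1
  have hgtd : ∀ t x : ℝ, deriv (fun τ => g τ x) t = gt' t x := fun t x => (hgt t x).deriv
  have hgxd : ∀ t x : ℝ, deriv (fun ξ => g t ξ) x = gx' t x := fun t x => (hgx t x).deriv
  have hfdc : Continuous (fderiv ℝ gg) := hg.continuous_fderiv one_ne_zero
  have hgtc : Continuous fun q : ℝ × ℝ => gt' q.1 q.2 := hfdc.clm_apply continuous_const
  have hgxc : Continuous fun q : ℝ × ℝ => gx' q.1 q.2 := hfdc.clm_apply continuous_const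
  have hdz : ∀ t x : ℝ, ¬(|t| ≤ R ∧ |x| ≤ R) → gt' t x = 0 ∧ gx' t x = 0 := by
    intro t x h
    have hnot : fderiv ℝ gg (t, x) = 0 := by
      by_contra hne
      exact h (hball _ (support_fderiv_subset (𝕜 := ℝ) hne))
    constructor
    · rw [hgt'def]; simp only [hnot]; rfl
    · rw [hgx'def]; simp only [hnot]; rfl
  have hgt_supp : ∀ t x : ℝ, gt' t x ≠ 0 → |t| ≤ R ∧ |x| ≤ R := by
    intro t x hne; by_contra hcon; exact hne (hdz t x hcon).1
  have hgx_supp : ∀ t x : ℝ, gx' t x ≠ 0 → |t| ≤ R ∧ |x| ≤ R := by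
    intro t x hne; by_contra hcon; exact hne (hdz t x hcon).2
  have hg_supp : ∀ t x : ℝ, g t x ≠ 0 → |t| ≤ R ∧ |x| ≤ R := by
    intro t x hne; by_contra hcon; exact hne (hgz t x hcon)
  -- bounds
  obtain ⟨Cg, hCgb⟩ := hgsupp.exists_bound_of_continuous hg.continuous
  obtain ⟨Cd, hCdb⟩ := (hgsupp.fderiv (𝕜 := ℝ)).exists_bound_of_continuous hfdc
  have hone : ‖((1 : ℝ), (0 : ℝ))‖ = 1 := by simp [Prod.norm_def]
  have hone' : ‖((0 : ℝ), (1 : ℝ))‖ = 1 := by simp [Prod.norm_def]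
  have hCd0 : 0 ≤ Cd := le_trans (norm_nonneg _) (hCdb 0)
  have hgtb : ∀ t x : ℝ, |gt' t x| ≤ Cd := by
    intro t x
    have h1 := (fderiv ℝ gg (t, x)).le_opNorm ((1 : ℝ), (0 : ℝ))
    rw [hone, mul_one] at h1
    exact le_trans h1 (hCdb (t, x))
  have hgxb : ∀ t x : ℝ, |gx' t x| ≤ Cd := by
    intro t x
    have h1 := (fderiv ℝ gg (t, x)).le_opNorm ((0 : ℝ), (1 : ℝ))
    rw [hone', mul_one] at h1
    exact le_trans h1 (hCdb (t, x))
  have hgb : ∀ t x : ℝ, |g t x| ≤ Cg := fun t x => hCgb (t, x)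
  -- product integrability
  have hvol : (volume : Measure (ℝ × ℝ)) = volume.prod volume := Measure.volume_eq_prod ℝ ℝ
  have Ivtgt : Integrable (fun q : ℝ × ℝ => vt q.1 q.2 * gt' q.1 q.2) (volume.prod volume) :=
    prod_int hc0 hRpos.le (hvol ▸ hvtcont.aestronglyMeasurable) (fun t => (hL2 t).2.1)
      (fun t => (hc t).2.1) hgtc hgtb hgt_supp
  have Ivttg : Integrable (fun q : ℝ × ℝ => vtt q.1 q.2 * g q.1 q.2) (volume.prod volume) :=
    prod_int hc0 hRpos.le (hvol ▸ hvttm) (fun t => (hL2 t).2.2.1)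
      (fun t => (hc t).2.2.1) hg.continuous hgb hg_supp
  have Ivxgx : Integrable (fun q : ℝ × ℝ => vx q.1 q.2 * gx' q.1 q.2) (volume.prod volume) :=
    prod_int hc0 hRpos.le (hvol ▸ hvxm') (fun t => (hL2 t).2.2.2.1)
      (fun t => (hc t).2.2.2.1) hgxc hgxb hgx_supp
  set μT : Measure ℝ := volume.restrict (Set.Ioi 0) with hμTdef
  have hprodT : μT.prod volume = (volume.prod volume).restrict (Set.Ioi 0 ×ˢ (Set.univ : Set ℝ)) := by
    rw [hμTdef]
    calc (volume.restrict (Set.Ioi (0:ℝ))).prod volume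
        = (volume.restrict (Set.Ioi (0:ℝ))).prod (volume.restrict Set.univ) := by
          rw [Measure.restrict_univ]
      _ = (volume.prod volume).restrict (Set.Ioi 0 ×ˢ (Set.univ : Set ℝ)) := Measure.prod_restrict _ _
  have IvtgtT : Integrable (fun q : ℝ × ℝ => vt q.1 q.2 * gt' q.1 q.2) (μT.prod volume) := by
    rw [hprodT]; exact Ivtgt.integrableOn
  have IvttgT : Integrable (fun q : ℝ × ℝ => vtt q.1 q.2 * g q.1 q.2) (μT.prod volume) := by
    rw [hprodT]; exact Ivttg.integrableOn
  have IvxgxT : Integrable (fun q : ℝ × ℝ => vx q.1 q.2 * gx' q.1 q.2) (μT.prod volume) := by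
    rw [hprodT]; exact Ivxgx.integrableOn
  -- STEP 1 : time integration by parts
  have eq1 : (∫ t in Set.Ioi (0:ℝ), ∫ x : ℝ, vtt t x * g t x)
      + (∫ t in Set.Ioi (0:ℝ), ∫ x : ℝ, vt t x * gt' t x)
      = - ∫ x : ℝ, vt 0 x * g 0 x := by
    have IH : Integrable
        (fun q : ℝ × ℝ => vtt q.1 q.2 * g q.1 q.2 + vt q.1 q.2 * gt' q.1 q.2)
        (μT.prod volume) := IvttgT.add IvtgtT
    have IHswap : Integrable
        (fun q : ℝ × ℝ => vtt q.2 q.1 * g q.2 q.1 + vt q.2 q.1 * gt' q.2 q.1)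
        (volume.prod μT) := IH.swap
    have aeslice : ∀ᵐ x : ℝ, Integrable
        (fun t => vtt t x * g t x + vt t x * gt' t x) μT := IHswap.prod_right_ae
    have hvtc1 : ∀ x : ℝ, Continuous fun t => vt t x := fun x =>
      hvtcont.comp (continuous_id.prodMk continuous_const)
    have hgc1 : ∀ x : ℝ, Continuous fun t => g t x := fun x =>
      hg.continuous.comp (continuous_id.prodMk continuous_const)
    have eqC : ∀ᵐ x : ℝ,
        (∫ t in Set.Ioi (0:ℝ), (vtt t x * g t x + vt t x * gt' t x)) = -(vt 0 x * g 0 x) := by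
      filter_upwards [aeslice] with x hx
      have hderiv : ∀ t : ℝ, HasDerivAt (fun τ => vt τ x * g τ x)
          (vtt t x * g t x + vt t x * gt' t x) t := fun t => (hvtt t x).mul (hgt t x)
      have hcont : ContinuousWithinAt (fun τ => vt τ x * g τ x) (Set.Ici 0) 0 :=
        (((hvtc1 x).mul (hgc1 x))).continuousWithinAt
      have htend : Tendsto (fun τ => vt τ x * g τ x) atTop (𝓝 0) := by
        have hev : (fun _ : ℝ => (0:ℝ)) =ᶠ[atTop] fun τ => vt τ x * g τ x := by
          filter_upwards [Filter.eventually_ge_atTop (R + 1)] with τ hτ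
          have hgz0 : g τ x = 0 := by
            apply hgz
            intro hcon
            have := hcon.1
            rw [abs_le] at this
            linarith [this.2]
          rw [hgz0, mul_zero]
        exact Tendsto.congr' hev tendsto_const_nhds
      have hint : IntegrableOn (fun t => vtt t x * g t x + vt t x * gt' t x)
          (Set.Ioi 0) volume := hx
      have := integral_Ioi_of_hasDerivAt_of_tendsto hcont (fun t _ => hderiv t) hint htend
      rw [this, zero_sub]
    calc (∫ t in Set.Ioi (0:ℝ), ∫ x : ℝ, vtt t x * g t x)
          + (∫ t in Set.Ioi (0:ℝ), ∫ x : ℝ, vt t x * gt' t x)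
        = ∫ t in Set.Ioi (0:ℝ), ∫ x : ℝ, (vtt t x * g t x + vt t x * gt' t x) := by
          rw [← integral_add IvttgT.integral_prod_left IvtgtT.integral_prod_left]
          apply integral_congr_ae
          filter_upwards [IvttgT.prod_right_ae, IvtgtT.prod_right_ae] with t h1 h2
          exact (integral_add h1 h2).symm
      _ = ∫ x : ℝ, ∫ t in Set.Ioi (0:ℝ), (vtt t x * g t x + vt t x * gt' t x) :=
          integral_integral_swap IH
      _ = ∫ x : ℝ, -(vt 0 x * g 0 x) := integral_congr_ae eqC
      _ = - ∫ x : ℝ, vt 0 x * g 0 x := by rw [integral_neg]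
  -- STEP 2 : spatial identity
  have hsgnm : Measurable Real.sign := by
    have h : Real.sign = fun r : ℝ => if r < 0 then (-1:ℝ) else if 0 < r then 1 else 0 := by
      funext r; rfl
    rw [h]
    exact Measurable.ite (measurableSet_lt measurable_id measurable_const) measurable_const
      (Measurable.ite (measurableSet_lt measurable_const measurable_id) measurable_const
        measurable_const)
  have hsgnb : ∀ y : ℝ, ‖Real.sign y‖ ≤ 1 := by
    intro y
    rw [Real.norm_eq_abs]
    rcases lt_trichotomy y 0 with h | h | h
    · rw [Real.sign_of_neg h]; norm_num
    · rw [h, Real.sign_zero]; norm_num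
    · rw [Real.sign_of_pos h]; norm_num
  have eq2 : ∀ᵐ t : ℝ, (∫ x : ℝ, vtt t x * g t x)
      = -(a^2) * (∫ x : ℝ, vx t x * gx' t x)
        - ∑ j, a^2 * (vxp j t - vxm j t) * g t (s j) := by
    have haeD2 : ∀ᵐ t : ℝ, AEStronglyMeasurable (fun x => D2 t x) volume :=
      (hvol ▸ hD2m).prodMk_left
    have haevx : ∀ᵐ t : ℝ, AEStronglyMeasurable (fun x => vx t x) volume :=
      (hvol ▸ hvxm').prodMk_left
    filter_upwards [haeD2, haevx] with t hD2t hvxt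
    have hgslice : ContDiff ℝ 1 fun ξ => g t ξ :=
      hg.comp ((contDiff_const (c := t)).prodMk contDiff_id)
    have hgslice_supp : HasCompactSupport fun ξ => g t ξ := by
      apply HasCompactSupport.intro (isCompact_Icc (a := -R) (b := R))
      intro x hx
      exact hgz t x fun hcon => hx (Set.mem_Icc.mpr (abs_le.mp hcon.2))
    have hgxc_t : Continuous fun x => gx' t x := hgxc.comp (Continuous.prodMk_right t)
    have hg_t_supp : ∀ x : ℝ, R + 1 ≤ |x| → g t x = 0 := by
      intro x hx
      exact hgz t x fun hcon => by linarith [hcon.2]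
    have h1 : (∫ x : ℝ, vtt t x * g t x) = a^2 * ∫ x : ℝ, D2 t x * g t x := by
      rw [← integral_const_mul]
      apply integral_congr_ae
      filter_upwards [heq t] with x hx
      rw [hx]; ring
    have h2 : (∫ x : ℝ, D2 t x * g t x)
        = - ∫ x : ℝ,
            (vx t x - 2⁻¹ * ∑ j, (vxp j t - vxm j t) * Real.sign (x - s j)) * gx' t x :=
      parts_x (by linarith : (0:ℝ) < R + 1) hD2t (hL2 t).2.2.2.2 (fun x y => hreg t x y)
        (hgx t) hgxc_t hg_t_supp
    have hIgx : Integrable (fun x => gx' t x) := by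
      apply hgxc_t.integrable_of_hasCompactSupport
      apply HasCompactSupport.intro (isCompact_Icc (a := -R) (b := R))
      intro x hx
      exact (hdz t x fun hcon => hx (Set.mem_Icc.mpr (abs_le.mp hcon.2))).2
    have hIvxg : Integrable (fun x => vx t x * gx' t x) :=
      slice_int hvxt (hL2 t).2.2.2.1 hgxc_t.aestronglyMeasurable
        (fun x => hgxb t x) (fun x hx => (hgx_supp t x hx).2)
    have hISgn : ∀ j : Fin n, Integrable (fun x => Real.sign (x - s j) * gx' t x) := by
      intro j
      apply Integrable.bdd_mul hIgx
      · exact (hsgnm.comp (measurable_id.sub measurable_const)).aestronglyMeasurable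
      · exact Eventually.of_forall fun x => hsgnb _
    have hder : ∀ x : ℝ, deriv (fun ξ => g t ξ) x = gx' t x := fun x => (hgx t x).deriv
    have hsign : ∀ j : Fin n,
        (∫ x : ℝ, Real.sign (x - s j) * gx' t x) = -2 * g t (s j) := by
      intro j
      have hIoi : ∫ x in Set.Ioi (s j), deriv (fun ξ => g t ξ) x = - g t (s j) :=
        HasCompactSupport.integral_Ioi_deriv_eq hgslice hgslice_supp (s j)
      have hIic : ∫ x in Set.Iic (s j), deriv (fun ξ => g t ξ) x = g t (s j) :=
        HasCompactSupport.integral_Iic_deriv_eq hgslice hgslice_supp (s j)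
      simp_rw [hder] at hIoi hIic
      have h5 := intervalIntegral.integral_Iic_add_Ioi (b := s j) (hISgn j).integrableOn (hISgn j).integrableOn
      have h6 : ∫ x in Set.Ioi (s j), Real.sign (x - s j) * gx' t x
          = ∫ x in Set.Ioi (s j), gx' t x := by
        apply setIntegral_congr_fun measurableSet_Ioi
        intro x hx
        have hx' : (0:ℝ) < x - s j := by
          have := Set.mem_Ioi.mp hx; linarith
        show Real.sign (x - s j) * gx' t x = gx' t x
        rw [Real.sign_of_pos hx', one_mul]
      have h7 : ∫ x in Set.Iic (s j), Real.sign (x - s j) * gx' t x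
          = ∫ x in Set.Iic (s j), -(gx' t x) := by
        apply setIntegral_congr_ae measurableSet_Iic
        have hne : ∀ᵐ x : ℝ, x ≠ s j := by
          rw [ae_iff]
          have hset : {x : ℝ | ¬ x ≠ s j} = {s j} := by ext y; simp
          rw [hset]; exact measure_singleton _
        filter_upwards [hne] with x hx hxm
        have hlt : x - s j < 0 := by
          have := lt_of_le_of_ne (Set.mem_Iic.mp hxm) hx; linarith
        show Real.sign (x - s j) * gx' t x = -(gx' t x)
        rw [Real.sign_of_neg hlt, neg_one_mul]
      rw [← h5, h6, h7, integral_neg, hIic, hIoi]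
      ring
    have hsplit_fun : (fun x => (2⁻¹ * ∑ j, (vxp j t - vxm j t) * Real.sign (x - s j)) * gx' t x)
        = fun x => ∑ j, (2⁻¹ * (vxp j t - vxm j t)) * (Real.sign (x - s j) * gx' t x) := by
      funext x
      rw [Finset.mul_sum, Finset.sum_mul]
      apply Finset.sum_congr rfl
      intro j _
      ring
    have hsum_int : Integrable
        (fun x => (2⁻¹ * ∑ j, (vxp j t - vxm j t) * Real.sign (x - s j)) * gx' t x) := by
      rw [hsplit_fun]
      exact integrable_finset_sum _ fun j _ => (hISgn j).const_mul _
    have h9 : (∫ x : ℝ, (2⁻¹ * ∑ j, (vxp j t - vxm j t) * Real.sign (x - s j)) * gx' t x)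
        = - ∑ j, (vxp j t - vxm j t) * g t (s j) := by
      rw [hsplit_fun, integral_finset_sum _ fun j _ => (hISgn j).const_mul _]
      rw [← Finset.sum_neg_distrib]
      apply Finset.sum_congr rfl
      intro j _
      rw [integral_const_mul, hsign j]
      ring
    have h8 : (∫ x : ℝ,
          (vx t x - 2⁻¹ * ∑ j, (vxp j t - vxm j t) * Real.sign (x - s j)) * gx' t x)
        = (∫ x : ℝ, vx t x * gx' t x)
          - ∫ x : ℝ, (2⁻¹ * ∑ j, (vxp j t - vxm j t) * Real.sign (x - s j)) * gx' t x := by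
      rw [← integral_sub hIvxg hsum_int]
      apply integral_congr_ae
      apply Eventually.of_forall
      intro x
      ring
    have hfin : ∑ j, a^2 * (vxp j t - vxm j t) * g t (s j)
        = a^2 * ∑ j, (vxp j t - vxm j t) * g t (s j) := by
      rw [Finset.mul_sum]
      apply Finset.sum_congr rfl
      intro j _
      ring
    rw [h1, h2, h8, h9, hfin]
    ring
  -- STEP 3 : oscillator integration by parts
  have key3 : ρ₀ * S₀ * (-(∫ t in Set.Ioi (0:ℝ), ∫ x : ℝ, vtt t x * g t x)
        - a^2 * (∫ t in Set.Ioi (0:ℝ), ∫ x : ℝ, vx t x * gx' t x))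
      - (∫ t in Set.Ioi (0:ℝ), ∑ j, K j * z j t * g t (s j))
      + (∫ t in Set.Ioi (0:ℝ), ∑ j, M j * zp j t * gt' t (s j)) = 0 := by
    have hzc : ∀ j, Continuous (z j) := fun j =>
      Differentiable.continuous (fun t => (hzp j t).differentiableAt)
    have hzpc : ∀ j, Continuous (zp j) := fun j =>
      Differentiable.continuous (fun t => (hzpp j t).differentiableAt)
    have hgc2 : ∀ x : ℝ, Continuous fun t => g t x := fun x =>
      hg.continuous.comp (continuous_id.prodMk continuous_const)
    have hgtc2 : ∀ x : ℝ, Continuous fun t => gt' t x := fun x =>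
      hgtc.comp (continuous_id.prodMk continuous_const)
    set G0 : ℝ → ℝ := fun t => ∑ j, M j * zp j t * g t (s j) with hG0def
    set G0' : ℝ → ℝ := fun t =>
      ∑ j, (M j * zpp j t * g t (s j) + M j * zp j t * gt' t (s j)) with hG0'def
    have hG0deriv : ∀ t, HasDerivAt G0 (G0' t) t := by
      intro t
      apply HasDerivAt.fun_sum
      intro j _
      exact ((hzpp j t).const_mul (M j)).mul (hgt t (s j))
    -- integrability of the pieces
    have hKzg_int : Integrable (fun t => ∑ j, K j * z j t * g t (s j)) μT := by
      apply Integrable.integrableOn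
      apply Continuous.integrable_of_hasCompactSupport
      · exact continuous_finset_sum _ fun j _ =>
          (continuous_const.mul (hzc j)).mul (hgc2 (s j))
      · apply HasCompactSupport.intro (isCompact_Icc (a := -R) (b := R))
        intro t ht
        have hgz0 : ∀ j : Fin n, g t (s j) = 0 := by
          intro j
          apply hgz
          intro hcon
          exact ht (Set.mem_Icc.mpr (abs_le.mp hcon.1))
        apply Finset.sum_eq_zero
        intro j _
        rw [hgz0 j, mul_zero]
    have hMzp_int : Integrable (fun t => ∑ j, M j * zp j t * gt' t (s j)) μT := by
      apply Integrable.integrableOn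
      apply Continuous.integrable_of_hasCompactSupport
      · exact continuous_finset_sum _ fun j _ =>
          (continuous_const.mul (hzpc j)).mul (hgtc2 (s j))
      · apply HasCompactSupport.intro (isCompact_Icc (a := -R) (b := R))
        intro t ht
        have hgz0 : ∀ j : Fin n, gt' t (s j) = 0 := by
          intro j
          have : ¬(|t| ≤ R ∧ |s j| ≤ R) := fun hcon => ht (Set.mem_Icc.mpr (abs_le.mp hcon.1))
          exact (hdz t (s j) this).1
        apply Finset.sum_eq_zero
        intro j _
        rw [hgz0 j, mul_zero]
    have hW_int : Integrable (fun t => ∫ x : ℝ, vtt t x * g t x) μT :=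
      IvttgT.integral_prod_left
    have hV_int : Integrable (fun t => ∫ x : ℝ, vx t x * gx' t x) μT :=
      IvxgxT.integral_prod_left
    -- G0' expressed via eq2
    have hA : ∀ᵐ t ∂μT, G0' t
        = ρ₀ * S₀ * (-(∫ x : ℝ, vtt t x * g t x) - a^2 * (∫ x : ℝ, vx t x * gx' t x))
          - (∑ j, K j * z j t * g t (s j)) + (∑ j, M j * zp j t * gt' t (s j)) := by
      apply ae_restrict_of_ae
      filter_upwards [eq2] with t ht
      have hsum : ∑ j, M j * zpp j t * g t (s j)
          = ρ₀ * S₀ * (∑ j, a^2 * (vxp j t - vxm j t) * g t (s j))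
            - ∑ j, K j * z j t * g t (s j) := by
        rw [Finset.mul_sum, ← Finset.sum_sub_distrib]
        apply Finset.sum_congr rfl
        intro j _
        have h2 : M j * zpp j t = a^2 * ρ₀ * S₀ * (vxp j t - vxm j t) - K j * z j t := by
          linarith [hosc j t]
        rw [h2]; ring
      have hζ : ∑ j, a^2 * (vxp j t - vxm j t) * g t (s j)
          = -(∫ x : ℝ, vtt t x * g t x) - a^2 * (∫ x : ℝ, vx t x * gx' t x) := by
        linarith [ht]
      simp only [hG0'def]
      rw [Finset.sum_add_distrib, hsum, hζ]
    have hG0'_int : Integrable G0' μT := by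
      have hbig : Integrable (fun t =>
          ρ₀ * S₀ * (-(∫ x : ℝ, vtt t x * g t x) - a^2 * (∫ x : ℝ, vx t x * gx' t x))
          - (∑ j, K j * z j t * g t (s j)) + (∑ j, M j * zp j t * gt' t (s j))) μT :=
        (((hW_int.neg.sub (hV_int.const_mul _)).const_mul _).sub hKzg_int).add hMzp_int
      exact hbig.congr (hA.mono fun t ht => ht.symm)
    have hG0cont : ContinuousWithinAt G0 (Set.Ici 0) 0 :=
      (continuous_finset_sum _ fun j _ =>
        (continuous_const.mul (hzpc j)).mul (hgc2 (s j))).continuousWithinAt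
    have hG0tend : Tendsto G0 atTop (𝓝 0) := by
      have hev : (fun _ : ℝ => (0:ℝ)) =ᶠ[atTop] G0 := by
        filter_upwards [Filter.eventually_ge_atTop (R + 1)] with τ hτ
        simp only [hG0def]
        symm
        apply Finset.sum_eq_zero
        intro j _
        have hgz0 : g τ (s j) = 0 := by
          apply hgz
          intro hcon
          have := abs_le.mp hcon.1
          linarith [this.2]
        rw [hgz0, mul_zero]
      exact Tendsto.congr' hev tendsto_const_nhds
    have hFTC3 : ∫ t in Set.Ioi (0:ℝ), G0' t = 0 - G0 0 :=
      integral_Ioi_of_hasDerivAt_of_tendsto hG0cont (fun t _ => hG0deriv t) hG0'_int hG0tend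
    have hG00 : G0 0 = 0 := by
      simp only [hG0def]
      apply Finset.sum_eq_zero
      intro j _
      rw [hz0 j, mul_zero, zero_mul]
    have hsplit : ∫ t in Set.Ioi (0:ℝ), G0' t
        = ρ₀ * S₀ * (-(∫ t in Set.Ioi (0:ℝ), ∫ x : ℝ, vtt t x * g t x)
            - a^2 * (∫ t in Set.Ioi (0:ℝ), ∫ x : ℝ, vx t x * gx' t x))
          - (∫ t in Set.Ioi (0:ℝ), ∑ j, K j * z j t * g t (s j))
          + (∫ t in Set.Ioi (0:ℝ), ∑ j, M j * zp j t * gt' t (s j)) := by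
      have hI1 : Integrable (fun t =>
          -(∫ x : ℝ, vtt t x * g t x) - a^2 * (∫ x : ℝ, vx t x * gx' t x)) μT :=
        hW_int.neg.sub (hV_int.const_mul _)
      have hI2 : Integrable (fun t =>
          ρ₀ * S₀ * (-(∫ x : ℝ, vtt t x * g t x) - a^2 * (∫ x : ℝ, vx t x * gx' t x))) μT :=
        hI1.const_mul _
      have hI3 : Integrable (fun t =>
          ρ₀ * S₀ * (-(∫ x : ℝ, vtt t x * g t x) - a^2 * (∫ x : ℝ, vx t x * gx' t x))
          - (∑ j, K j * z j t * g t (s j))) μT := hI2.sub hKzg_int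
      have hI4 : Integrable (fun t => -(∫ x : ℝ, vtt t x * g t x)) μT := hW_int.neg
      have hI5 : Integrable (fun t => a^2 * (∫ x : ℝ, vx t x * gx' t x)) μT :=
        hV_int.const_mul _
      rw [show (∫ t in Set.Ioi (0:ℝ), G0' t) = ∫ t, G0' t ∂μT from rfl]
      rw [integral_congr_ae hA, integral_add hI3 hMzp_int, integral_sub hI2 hKzg_int,
        integral_const_mul, integral_sub hI4 hI5, integral_neg, integral_const_mul]
    rw [hG00, sub_zero] at hFTC3
    rw [hFTC3] at hsplit
    linarith [hsplit]
  -- STEP 4 : conclusion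
  simp_rw [hgtd, hgxd]
  have hρS : (0:ℝ) < ρ₀ * S₀ := by positivity
  set W := ∫ t in Set.Ioi (0:ℝ), ∫ x : ℝ, vtt t x * g t x with hW
  set T := ∫ t in Set.Ioi (0:ℝ), ∫ x : ℝ, vt t x * gt' t x with hT
  set V := ∫ t in Set.Ioi (0:ℝ), ∫ x : ℝ, vx t x * gx' t x with hV
  set P := ∫ x : ℝ, vt 0 x * g 0 x with hP
  set KZ := ∫ t in Set.Ioi (0:ℝ), ∑ j, K j * z j t * g t (s j) with hKZ
  set MZ := ∫ t in Set.Ioi (0:ℝ), ∑ j, M j * zp j t * gt' t (s j) with hMZ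
  have hgoal1 : -T - P = W := by linarith [eq1]
  rw [hgoal1]
  have h3 : ρ₀ * S₀ * (-W - a^2*V) = KZ - MZ := by linarith [key3]
  have h2 : -W - a^2*V = (ρ₀*S₀)⁻¹*KZ - (ρ₀*S₀)⁻¹*MZ := by
    have h5 : (ρ₀*S₀)⁻¹ * (ρ₀*S₀*(-W - a^2*V)) = (ρ₀*S₀)⁻¹ * (KZ - MZ) := by rw [h3]
    rw [← mul_assoc, inv_mul_cancel₀ hρS.ne', one_mul] at h5
    rw [h5]; ring
  linarith [h2]
end
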